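/- arXiv:1301.0140 — 7 statements merged into one kernel-verified Lean document; each statement's English description precedes it below -/
import Mathlib

section
/- Let ⊙ be a non-degenerate pseudo-multiplication on [0,∞] and let τ be a σ-maxitive measure on a measurable space (E, 𝔅). Then τ has the Radon–Nikodym property with respect to the idempotent ⊙-integral if and only if τ is σ-⊙-finite and σ-principal. -/
open scoped ENNReal
open Set

/-- A pseudo-multiplication on `[0,∞]`: associative, monotone in each argument,
continuous on `(0,∞) × [0,∞]`, with `s ↦ s ⊙ t` continuous on `(0,∞]`,
admitting a left identity, without zero divisors, and with `0` as annihilator. -/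
structure PseudoMul where
  op : ℝ≥0∞ → ℝ≥0∞ → ℝ≥0∞
  assoc : ∀ a b c, op (op a b) c = op a (op b c)
  mono_left : ∀ t, Monotone fun s => op s t
  mono_right : ∀ s, Monotone fun t => op s t
  continuousOn : ContinuousOn (fun p : ℝ≥0∞ × ℝ≥0∞ => op p.1 p.2) (Ioo 0 ⊤ ×ˢ univ)
  continuousOn_left : ∀ t, ContinuousOn (fun s => op s t) (Ioi 0)
  one : ℝ≥0∞
  one_op : ∀ t, op one t = t
  no_zero_divisors : ∀ s t, op s t = 0 → s = 0 ∨ t = 0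
  zero_op : ∀ t, op 0 t = 0
  op_zero : ∀ t, op t 0 = 0

/-- An element `t` is `⊙`-finite if `⨅_{s>0} s ⊙ t = 0`. -/
def PseudoMul.OFinite (P : PseudoMul) (t : ℝ≥0∞) : Prop :=
  ⨅ s ∈ Ioi (0 : ℝ≥0∞), P.op s t = 0

/-- `⊙` is non-degenerate if its left identity is `⊙`-finite. -/
def PseudoMul.Nondegenerate (P : PseudoMul) : Prop :=
  P.OFinite P.one

/-- A σ-maxitive measure: vanishes on `∅` and turns countable unions of
measurable sets into suprema. -/
def SigmaMaxitive {E : Type*} [MeasurableSpace E] (ν : Set E → ℝ≥0∞) : Prop :=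
  ν ∅ = 0 ∧ ∀ B : ℕ → Set E, (∀ n, MeasurableSet (B n)) →
    ν (⋃ n, B n) = ⨆ n, ν (B n)

/-- The idempotent `⊙`-integral `∫_B f ⊙ dν = ⨆_{t ∈ [0,∞)} t ⊙ ν(B ∩ {f > t})`. -/
noncomputable def idemInt {E : Type*} [MeasurableSpace E] (P : PseudoMul) (ν : Set E → ℝ≥0∞)
    (f : E → ℝ≥0∞) (B : Set E) : ℝ≥0∞ :=
  ⨆ t ∈ Iio (⊤ : ℝ≥0∞), P.op t (ν (B ∩ {x | t < f x}))

/-- `ν ≪⊙ τ`: `ν(B) ≤ ∞ ⊙ τ(B)` whenever `τ(B)` is `⊙`-finite. -/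
def OAbsCont {E : Type*} [MeasurableSpace E] (P : PseudoMul)
    (ν τ : Set E → ℝ≥0∞) : Prop :=
  ∀ B : Set E, MeasurableSet B → P.OFinite (τ B) → ν B ≤ P.op ⊤ (τ B)

/-- `τ` is σ-`⊙`-finite. -/
def SigmaOFinite {E : Type*} [MeasurableSpace E] (P : PseudoMul)
    (τ : Set E → ℝ≥0∞) : Prop :=
  ∃ B : ℕ → Set E, (∀ n, MeasurableSet (B n)) ∧ (⋃ n, B n) = univ ∧
    ∀ n, P.OFinite (τ (B n))

/-- A σ-ideal of the σ-algebra: a nonempty collection of measurable sets closed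
under countable unions and under measurable subsets. -/
def IsSigmaIdeal {E : Type*} [MeasurableSpace E] (I : Set (Set E)) : Prop :=
  I.Nonempty ∧ (∀ A ∈ I, MeasurableSet A) ∧
    (∀ B : ℕ → Set E, (∀ n, B n ∈ I) → (⋃ n, B n) ∈ I) ∧
    (∀ A B : Set E, B ∈ I → A ⊆ B → MeasurableSet A → A ∈ I)

/-- `τ` is σ-principal. -/
def SigmaPrincipal {E : Type*} [MeasurableSpace E] (τ : Set E → ℝ≥0∞) : Prop :=
  ∀ I : Set (Set E), IsSigmaIdeal I → ∃ L ∈ I, ∀ S ∈ I, τ (S \ L) = 0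

/-- `τ` has the Radon–Nikodym property w.r.t. the idempotent `⊙`-integral. -/
def HasRNP {E : Type*} [MeasurableSpace E] (P : PseudoMul)
    (τ : Set E → ℝ≥0∞) : Prop :=
  ∀ ν : Set E → ℝ≥0∞, SigmaMaxitive ν → OAbsCont P ν τ →
    ∃ c : E → ℝ≥0∞, Measurable c ∧
      ∀ B : Set E, MeasurableSet B → ν B = idemInt P τ c B


namespace RNPAux
open Filter Topology


variable (P : PseudoMul)

lemma op_contAt_right {q : ℝ≥0∞} (h0 : q ≠ 0) (ht : q ≠ ⊤) (t : ℝ≥0∞) :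
    ContinuousAt (fun u => P.op q u) t := by
  have hopen : IsOpen ((Ioo (0:ℝ≥0∞) ⊤) ×ˢ (univ : Set ℝ≥0∞)) := isOpen_Ioo.prod isOpen_univ
  have hmem : ((q, t) : ℝ≥0∞ × ℝ≥0∞) ∈ (Ioo (0:ℝ≥0∞) ⊤) ×ˢ (univ : Set ℝ≥0∞) :=
    ⟨⟨pos_iff_ne_zero.mpr h0, lt_top_iff_ne_top.mpr ht⟩, mem_univ _⟩
  have hc : ContinuousAt (fun p : ℝ≥0∞ × ℝ≥0∞ => P.op p.1 p.2) (q, t) :=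
    P.continuousOn.continuousAt (hopen.mem_nhds hmem)
  exact hc.comp ((continuous_const.prodMk continuous_id).continuousAt)

lemma op_contAt_left {s : ℝ≥0∞} (hs : s ≠ 0) (x : ℝ≥0∞) :
    ContinuousAt (fun u => P.op u x) s :=
  (P.continuousOn_left x).continuousAt (isOpen_Ioi.mem_nhds (pos_iff_ne_zero.mpr hs))

lemma op_iSup {q : ℝ≥0∞} (h0 : q ≠ 0) (ht : q ≠ ⊤) {ι : Sort*} (x : ι → ℝ≥0∞) :
    P.op q (⨆ i, x i) = ⨆ i, P.op q (x i) :=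
  Monotone.map_iSup_of_continuousAt (op_contAt_right P h0 ht _) (P.mono_right q)
    (by simpa using P.op_zero q)

lemma op_le_of_lt {t x y : ℝ≥0∞} (ht : 0 < t)
    (h : ∀ s, 0 < s → s < t → P.op s x ≤ y) : P.op t x ≤ y := by
  obtain ⟨u, -, hmem, hlim⟩ := exists_seq_strictMono_tendsto' ht
  have hc : Tendsto (fun n => P.op (u n) x) atTop (𝓝 (P.op t x)) :=
    ((op_contAt_left P ht.ne' x).tendsto).comp hlim
  exact le_of_tendsto hc (Eventually.of_forall fun n => h _ (hmem n).1 (hmem n).2)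

lemma one_ne_zero' : P.one ≠ 0 := by
  intro h
  have := P.one_op 1
  rw [h, P.zero_op] at this
  exact one_ne_zero this.symm

lemma ofinite_zero : P.OFinite 0 := by
  refine le_antisymm ?_ (zero_le)
  refine le_trans (iInf₂_le 1 (by simp)) ?_
  rw [P.op_zero]

lemma ofinite_mono {x y : ℝ≥0∞} (h : x ≤ y) (hy : P.OFinite y) : P.OFinite x := by
  refine le_antisymm ?_ (zero_le)
  calc ⨅ s ∈ Ioi (0:ℝ≥0∞), P.op s x ≤ ⨅ s ∈ Ioi (0:ℝ≥0∞), P.op s y :=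
        iInf₂_mono fun s _ => P.mono_right s h
    _ = 0 := hy

lemma ofinite_of_op {t x : ℝ≥0∞} (ht : t ≠ 0) (h : P.OFinite (P.op t x)) : P.OFinite x := by
  refine le_antisymm ?_ (zero_le)
  have key : ∀ s ∈ Ioi (0:ℝ≥0∞), (⨅ s' ∈ Ioi (0:ℝ≥0∞), P.op s' x) ≤ P.op s (P.op t x) := by
    intro s hs
    rw [← P.assoc]
    refine iInf₂_le (P.op s t) ?_
    rw [mem_Ioi, pos_iff_ne_zero]
    intro h0
    rcases P.no_zero_divisors _ _ h0 with h' | h'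
    · exact absurd h' (ne_of_gt hs)
    · exact ht h'
  calc (⨅ s' ∈ Ioi (0:ℝ≥0∞), P.op s' x) ≤ ⨅ s ∈ Ioi (0:ℝ≥0∞), P.op s (P.op t x) :=
        le_iInf₂ key
    _ = 0 := h

lemma exists_rat_btwn' {a b : ℝ≥0∞} (hab : a < b) (ha : a ≠ ⊤) :
    ∃ r : ℚ, 0 < r ∧ a < ENNReal.ofReal r ∧ ENNReal.ofReal r < b := by
  rcases eq_or_ne b ⊤ with hb | hb
  · obtain ⟨r, hr1, hr2⟩ := exists_rat_btwn (lt_add_one a.toReal)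
    refine ⟨r, ?_, ?_, ?_⟩
    · exact_mod_cast (ENNReal.toReal_nonneg.trans_lt hr1)
    · exact (ENNReal.lt_ofReal_iff_toReal_lt ha).mpr hr1
    · rw [hb]; exact ENNReal.ofReal_lt_top
  · have h1 : a.toReal < b.toReal := (ENNReal.toReal_lt_toReal ha hb).mpr hab
    obtain ⟨r, hr1, hr2⟩ := exists_rat_btwn h1
    refine ⟨r, ?_, ?_, ?_⟩
    · exact_mod_cast (ENNReal.toReal_nonneg.trans_lt hr1)
    · exact (ENNReal.lt_ofReal_iff_toReal_lt ha).mpr hr1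
    · exact (ENNReal.ofReal_lt_iff_lt_toReal (by exact_mod_cast (ENNReal.toReal_nonneg.trans_lt hr1).le) hb).mpr hr2



variable {E : Type*} [MeasurableSpace E] {μ : Set E → ℝ≥0∞}

lemma maxitive_iUnion (hμ : SigmaMaxitive μ) {ι : Type*} [Countable ι]
    (A : ι → Set E) (hA : ∀ i, MeasurableSet (A i)) :
    μ (⋃ i, A i) = ⨆ i, μ (A i) := by
  cases isEmpty_or_nonempty ι with
  | inl h =>
    simp only [iUnion_of_empty, iSup_of_empty]
    exact hμ.1.trans (by simp)
  | inr h =>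
    obtain ⟨f, hf⟩ := exists_surjective_nat ι
    rw [← hf.iUnion_comp A, ← hf.iSup_comp (g := fun i => μ (A i))]
    exact hμ.2 _ (fun n => hA (f n))

lemma maxitive_mono (hμ : SigmaMaxitive μ) {A B : Set E}
    (hA : MeasurableSet A) (hB : MeasurableSet B) (h : A ⊆ B) : μ A ≤ μ B := by
  have hU : (A ∪ B) = B := union_eq_self_of_subset_left h
  have := maxitive_iUnion hμ (fun b : Bool => if b then A else B)
    (by intro b; cases b <;> simpa)
  rw [← hU]
  have hUU : (⋃ b : Bool, if b then A else B) = A ∪ B := by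
    ext x; simp [Bool.exists_bool, or_comm]
  rw [← hUU, this]
  exact le_iSup_of_le true (by simp)

lemma maxitive_union2 (hμ : SigmaMaxitive μ) {A B : Set E}
    (hA : MeasurableSet A) (hB : MeasurableSet B) : μ (A ∪ B) = μ A ⊔ μ B := by
  have := maxitive_iUnion hμ (fun b : Bool => if b then A else B)
    (by intro b; cases b <;> simpa)
  have hUU : (⋃ b : Bool, if b then A else B) = A ∪ B := by
    ext x; simp [Bool.exists_bool, or_comm]
  rw [← hUU, this]
  apply le_antisymm
  · refine iSup_le fun b => ?_
    cases b
    · simp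
    · simp
  · refine sup_le (le_iSup_of_le true (by simp)) (le_iSup_of_le false (by simp))

lemma maxitive_null_of_le (hμ : SigmaMaxitive μ) {A B : Set E}
    (hA : MeasurableSet A) (hB : MeasurableSet B) (h : A ⊆ B) (hB0 : μ B = 0) : μ A = 0 :=
  le_antisymm (le_trans (maxitive_mono hμ hA hB h) hB0.le) (zero_le)


lemma nec_ofinite {E : Type*} [MeasurableSpace E] (P : PseudoMul) (hP : P.Nondegenerate)
    (τ : Set E → ℝ≥0∞) (hτ : SigmaMaxitive τ) (hR : HasRNP P τ) : SigmaOFinite P τ := by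
  classical
  set I' : Set (Set E) := {B | MeasurableSet B ∧ ∃ A : ℕ → Set E,
    (∀ n, MeasurableSet (A n)) ∧ (∀ n, P.OFinite (τ (A n))) ∧ B ⊆ ⋃ n, A n} with hI'
  have hEmpty : (∅ : Set E) ∈ I' :=
    ⟨MeasurableSet.empty, fun _ => ∅, fun _ => MeasurableSet.empty,
      fun _ => by rw [hτ.1]; exact ofinite_zero P, by simp⟩
  have hHer : ∀ {A B : Set E}, B ∈ I' → A ⊆ B → MeasurableSet A → A ∈ I' := by
    rintro A B ⟨hBm, C, hCm, hCf, hBs⟩ hAB hAm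
    exact ⟨hAm, C, hCm, hCf, hAB.trans hBs⟩
  set ν : Set E → ℝ≥0∞ := fun B => if B ∈ I' then 0 else P.one with hν
  have hνmax : SigmaMaxitive ν := by
    constructor
    · simp [hν, hEmpty]
    · intro B hB
      by_cases hU : (⋃ n, B n) ∈ I'
      · have hall : ∀ n, B n ∈ I' := fun n => hHer hU (subset_iUnion B n) (hB n)
        simp [hν, hU, hall]
      · have hex : ∃ n, B n ∉ I' := by
          by_contra hall
          push_neg at hall
          apply hU
          refine ⟨MeasurableSet.iUnion hB, ?_⟩
          choose C hCm hCf hCs using fun n => (hall n).2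
          refine ⟨fun k => C k.unpair.1 k.unpair.2, fun k => hCm _ _, fun k => hCf _ _, ?_⟩
          intro x hx
          obtain ⟨n, hn⟩ := mem_iUnion.mp hx
          obtain ⟨m, hm⟩ := mem_iUnion.mp (hCs n hn)
          exact mem_iUnion.mpr ⟨Nat.pair n m, by simpa [Nat.unpair_pair] using hm⟩
        obtain ⟨k, hk⟩ := hex
        have hsup : (⨆ n, ν (B n)) = P.one := by
          apply le_antisymm
          · refine iSup_le fun n => ?_
            by_cases h : B n ∈ I' <;> simp [hν, h]
          · exact le_iSup_of_le k (by simp [hν, hk])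
        rw [hsup]; simp [hν, hU]
  have hac : OAbsCont P ν τ := by
    intro B hBm hBf
    have hBI : B ∈ I' := ⟨hBm, fun _ => B, fun _ => hBm, fun _ => hBf, subset_iUnion (fun _ : ℕ => B) 0⟩
    simp [hν, hBI]
  obtain ⟨c, hcm, hc⟩ := hR ν hνmax hac
  by_cases hUniv : (univ : Set E) ∈ I'
  · obtain ⟨-, A, hAm, hAf, hAs⟩ := hUniv
    exact ⟨A, hAm, eq_univ_of_univ_subset hAs, hAf⟩
  · exfalso
    have h1 : ν univ = P.one := by simp [hν, hUniv]
    have h2 := (hc univ MeasurableSet.univ).symm.trans h1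
    -- h2 : idemInt P τ c univ = P.one
    have hex : ∃ t ∈ Iio (⊤:ℝ≥0∞), P.op t (τ (univ ∩ {x | t < c x})) ≠ 0 := by
      by_contra hall
      push_neg at hall
      apply one_ne_zero' P
      rw [← h2, idemInt]
      refine le_antisymm (iSup₂_le fun t ht => ?_) (zero_le)
      rw [hall t ht]
    obtain ⟨t₀, ht₀, hne⟩ := hex
    set D := {x | t₀ < c x} with hD
    have hDm : MeasurableSet D := measurableSet_lt measurable_const hcm
    have ht00 : t₀ ≠ 0 := by
      rintro rfl
      rw [P.zero_op] at hne
      exact hne rfl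
    have hτD0 : τ (univ ∩ D) ≠ 0 := by
      intro h0
      rw [h0, P.op_zero] at hne
      exact hne rfl
    have hle : P.op t₀ (τ (univ ∩ D)) ≤ P.one := by
      rw [← h2, idemInt]
      exact le_iSup₂ (f := fun t _ => P.op t (τ (univ ∩ {x | t < c x}))) t₀ ht₀
    have hfD : P.OFinite (τ (univ ∩ D)) :=
      ofinite_of_op P ht00 (ofinite_mono P hle hP)
    have hDI : D ∈ I' := by
      refine ⟨hDm, fun _ => D, fun _ => hDm, fun _ => ?_, subset_iUnion (fun _ : ℕ => D) 0⟩
      rwa [univ_inter] at hfD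
    have hν0 : ν D = 0 := by simp [hν, hDI]
    have h3 := (hc D hDm).symm.trans hν0
    have h4 : P.op t₀ (τ (D ∩ {x | t₀ < c x})) = 0 := by
      refine le_antisymm ?_ (zero_le)
      rw [← h3, idemInt]
      exact le_iSup₂ (f := fun t _ => P.op t (τ (D ∩ {x | t < c x}))) t₀ ht₀
    have hDD : D ∩ {x | t₀ < c x} = D := inter_self D
    rw [hDD] at h4
    rcases P.no_zero_divisors _ _ h4 with h | h
    · exact ht00 h
    · apply hτD0
      rwa [univ_inter]

lemma nec_principal {E : Type*} [MeasurableSpace E] (P : PseudoMul)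
    (τ : Set E → ℝ≥0∞) (hτ : SigmaMaxitive τ) (hR : HasRNP P τ) : SigmaPrincipal τ := by
  intro I hI
  obtain ⟨hne, hmeas, hunion, hher⟩ := hI
  have hEmptyI : (∅ : Set E) ∈ I := by
    obtain ⟨A₀, hA₀⟩ := hne
    exact hher ∅ A₀ hA₀ (empty_subset _) MeasurableSet.empty
  classical
  set τ' : Set E → ℝ≥0∞ := fun B => ⨅ L ∈ I, τ (B \ L) with hτ'
  have hτ'le : ∀ B, ∀ L ∈ I, τ' B ≤ τ (B \ L) := fun B L hL => iInf₂_le L hL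
  have hτ'top : ∀ B, τ' B ≤ τ B := fun B => (hτ'le B ∅ hEmptyI).trans (by rw [diff_empty])
  have hτ'empty : τ' ∅ = 0 :=
    le_antisymm ((hτ'top ∅).trans (by rw [hτ.1])) (zero_le)
  have hτ'choose : ∀ B, ∀ ε : ℝ≥0∞, 0 < ε → τ' B < ⊤ → ∃ L ∈ I, τ (B \ L) ≤ τ' B + ε := by
    intro B ε hε hfin
    have hlt : τ' B < τ' B + ε := ENNReal.lt_add_right hfin.ne hε.ne'
    rw [hτ'] at hlt
    simp only [iInf_lt_iff] at hlt
    obtain ⟨L, hL, hLlt⟩ := hlt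
    exact ⟨L, hL, by rw [hτ']; exact hLlt.le⟩
  have hτ'max : SigmaMaxitive τ' := by
    constructor
    · exact hτ'empty
    · intro B hB
      apply le_antisymm
      · refine ENNReal.le_of_forall_pos_le_add fun ε hε hlt => ?_
        have hch : ∀ n, ∃ L ∈ I, τ (B n \ L) ≤ τ' (B n) + ε := by
          intro n
          refine hτ'choose _ _ (by exact_mod_cast hε) ?_
          exact lt_of_le_of_lt (le_iSup (fun n => τ' (B n)) n) hlt
        choose L hLI hLle using hch
        have hLU : (⋃ n, L n) ∈ I := hunion L hLI
        refine (hτ'le _ _ hLU).trans ?_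
        rw [iUnion_diff, hτ.2 _ (fun n => (hB n).diff (hmeas _ hLU))]
        refine iSup_le fun n => ?_
        refine le_trans (maxitive_mono hτ ((hB n).diff (hmeas _ hLU))
          ((hB n).diff (hmeas _ (hLI n))) (diff_subset_diff_right (subset_iUnion L n))) ?_
        exact (hLle n).trans (add_le_add (le_iSup (fun n => τ' (B n)) n) le_rfl)
      · refine iSup_le fun n => ?_
        rw [hτ']
        refine le_iInf₂ fun L hL => ?_
        exact (hτ'le _ L hL).trans (maxitive_mono hτ ((hB n).diff (hmeas _ hL))
          ((MeasurableSet.iUnion hB).diff (hmeas _ hL)) (diff_subset_diff_left (subset_iUnion B n)))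
  set g : ℝ≥0∞ → ℝ≥0∞ := fun x => ⨆ u ∈ Iio (⊤:ℝ≥0∞), P.op u x with hg
  have hg0 : g 0 = 0 := by
    refine le_antisymm (iSup₂_le fun u _ => ?_) (zero_le)
    rw [P.op_zero]
  have hgmono : Monotone g := fun x y h => iSup₂_mono fun u _ => P.mono_right u h
  have hgzero : ∀ x, g x = 0 → x = 0 := by
    intro x hx
    have h1 : P.op 1 x ≤ g x :=
      le_iSup₂ (f := fun u (_ : u ∈ Iio (⊤:ℝ≥0∞)) => P.op u x) 1 (by simp)
    rw [hx] at h1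
    rcases P.no_zero_divisors _ _ (le_antisymm h1 (zero_le)) with h | h
    · exact absurd h one_ne_zero
    · exact h
  have hgsup : ∀ x : ℕ → ℝ≥0∞, g (⨆ n, x n) = ⨆ n, g (x n) := by
    intro x
    have step : ∀ u ∈ Iio (⊤:ℝ≥0∞), P.op u (⨆ n, x n) = ⨆ n, P.op u (x n) := by
      intro u hu
      rcases eq_or_ne u 0 with rfl | hu0
      · simp [P.zero_op]
      · exact op_iSup P hu0 (ne_of_lt hu) x
    calc g (⨆ n, x n) = ⨆ u ∈ Iio (⊤:ℝ≥0∞), ⨆ n, P.op u (x n) := biSup_congr step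
      _ = ⨆ n, g (x n) := by
          apply le_antisymm
          · exact iSup₂_le fun u hu => iSup_le fun n => le_iSup_of_le n
              (le_iSup₂_of_le u hu le_rfl)
          · exact iSup_le fun n => iSup₂_le fun u hu => le_iSup₂_of_le u hu
              (le_iSup_of_le n le_rfl)
  set ν : Set E → ℝ≥0∞ := fun B => g (τ' B) with hνdef
  have hνmax : SigmaMaxitive ν :=
    ⟨by rw [hνdef]; simp only; rw [hτ'empty, hg0],
     fun B hB => by rw [hνdef]; simp only; rw [hτ'max.2 B hB, hgsup]⟩
  have hac : OAbsCont P ν τ := by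
    intro B hBm hBf
    refine (hgmono (hτ'top B)).trans ?_
    exact iSup₂_le fun u _ => P.mono_left (τ B) le_top
  obtain ⟨c, hcm, hc⟩ := hR ν hνmax hac
  have hD0 : ∀ S ∈ I, τ (S ∩ {x | 0 < c x}) = 0 := by
    intro S hS
    have hSm := hmeas S hS
    have hν0 : ν S = 0 := by
      have hz : τ' S = 0 :=
        le_antisymm ((hτ'le S S hS).trans (by rw [diff_self, hτ.1])) (zero_le)
      rw [hνdef]; simp only; rw [hz, hg0]
    have hint := (hc S hSm).symm.trans hν0
    have hτt : ∀ t : ℝ≥0∞, t ≠ 0 → t < ⊤ → τ (S ∩ {x | t < c x}) = 0 := by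
      intro t ht0 htt
      have hterm : P.op t (τ (S ∩ {x | t < c x})) = 0 := by
        refine le_antisymm ?_ (zero_le)
        rw [← hint, idemInt]
        exact le_iSup₂ (f := fun t (_ : t ∈ Iio (⊤:ℝ≥0∞)) =>
          P.op t (τ (S ∩ {x | t < c x}))) t htt
      rcases P.no_zero_divisors _ _ hterm with h | h
      · exact absurd h ht0
      · exact h
    have hcover : S ∩ {x | 0 < c x} = ⋃ n : ℕ, S ∩ {x | ((n:ℝ≥0∞)+1)⁻¹ < c x} := by
      ext x
      constructor
      · rintro ⟨hxS, hx⟩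
        obtain ⟨n, hn⟩ := ENNReal.exists_inv_nat_lt (pos_iff_ne_zero.mp hx)
        refine mem_iUnion.mpr ⟨n, hxS, lt_of_le_of_lt ?_ hn⟩
        exact ENNReal.inv_le_inv.mpr (by simp)
      · rintro hx
        obtain ⟨n, hxS, hx⟩ := mem_iUnion.mp hx
        exact ⟨hxS, show (0:ℝ≥0∞) < c x from lt_of_le_of_lt (zero_le) hx⟩
    rw [hcover, hτ.2 _ (fun n => hSm.inter (measurableSet_lt measurable_const hcm))]
    refine le_antisymm (iSup_le fun n => ?_) (zero_le)
    rw [hτt ((n:ℝ≥0∞)+1)⁻¹ (by simp) (by simp [ENNReal.inv_lt_top])]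
  set N := {x | c x = 0} with hN
  have hNm : MeasurableSet N := hcm (measurableSet_singleton 0)
  have hνN : ν N = 0 := by
    rw [hc N hNm, idemInt]
    refine le_antisymm (iSup₂_le fun t ht => ?_) (zero_le)
    have hempty : N ∩ {x | t < c x} = ∅ := by
      ext x
      simp only [hN, mem_inter_iff, mem_setOf_eq, mem_empty_iff_false, iff_false, not_and]
      intro h0 hlt
      rw [h0] at hlt
      exact (by simpa using hlt : False).elim
    rw [hempty, hτ.1, P.op_zero]
  have hτ'N : τ' N = 0 := hgzero _ hνN
  have hLn : ∀ n : ℕ, ∃ L ∈ I, τ (N \ L) ≤ ((n:ℝ≥0∞)+1)⁻¹ := by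
    intro n
    obtain ⟨L, hL, hle⟩ := hτ'choose N (((n:ℝ≥0∞)+1)⁻¹) (by simp [pos_iff_ne_zero])
      (by rw [hτ'N]; exact ENNReal.zero_lt_top)
    exact ⟨L, hL, by rwa [hτ'N, zero_add] at hle⟩
  choose L hLI hLle using hLn
  have hLU := hunion L hLI
  refine ⟨⋃ n, L n, hLU, ?_⟩
  intro S hS
  have hNL : τ (N \ ⋃ n, L n) = 0 := by
    have hbd : ∀ n : ℕ, τ (N \ ⋃ m, L m) ≤ ((n:ℝ≥0∞)+1)⁻¹ := fun n =>
      (maxitive_mono hτ (hNm.diff (hmeas _ hLU)) (hNm.diff (hmeas _ (hLI n)))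
        (diff_subset_diff_right (subset_iUnion L n))).trans (hLle n)
    by_contra hpos
    obtain ⟨n, hn⟩ := ENNReal.exists_inv_nat_lt hpos
    have h1 : ((n:ℝ≥0∞))⁻¹ < ((n:ℝ≥0∞)+1)⁻¹ := lt_of_lt_of_le hn (hbd n)
    have h2 : ((n:ℝ≥0∞)+1)⁻¹ ≤ ((n:ℝ≥0∞))⁻¹ := ENNReal.inv_le_inv.mpr (by simp)
    exact absurd h1 (not_lt_of_ge h2)
  have hsub : S \ (⋃ n, L n) ⊆ (S ∩ {x | 0 < c x}) ∪ (N \ ⋃ n, L n) := by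
    rintro x ⟨hxS, hxL⟩
    rcases eq_or_ne (c x) 0 with h0 | h0
    · exact Or.inr ⟨h0, hxL⟩
    · exact Or.inl ⟨hxS, pos_iff_ne_zero.mpr h0⟩
  refine maxitive_null_of_le hτ ((hmeas S hS).diff (hmeas _ hLU))
    (((hmeas S hS).inter (measurableSet_lt measurable_const hcm)).union
      (hNm.diff (hmeas _ hLU))) hsub ?_
  rw [maxitive_union2 hτ ((hmeas S hS).inter (measurableSet_lt measurable_const hcm))
    (hNm.diff (hmeas _ hLU)), hD0 S hS, hNL]
  simp

abbrev Qrat : Type := {r : ℚ // 0 < r}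

set_option maxHeartbeats 2000000 in
lemma suff {E : Type*} [MeasurableSpace E] (P : PseudoMul)
    (τ : Set E → ℝ≥0∞) (hτ : SigmaMaxitive τ)
    (hσf : SigmaOFinite P τ) (hσp : SigmaPrincipal τ) : HasRNP P τ := by
  intro ν hν hac
  classical
  let vr : Qrat → ℝ≥0∞ := fun q => ENNReal.ofReal (q.1 : ℝ)
  have hvr_pos : ∀ q : Qrat, 0 < vr q := fun q => ENNReal.ofReal_pos.mpr (by exact_mod_cast q.2)
  have hvr_top : ∀ q : Qrat, vr q < ⊤ := fun _ => ENNReal.ofReal_lt_top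
  have hvr_mono : ∀ {p q : Qrat}, p ≤ q → vr p ≤ vr q := fun h =>
    ENNReal.ofReal_le_ofReal (by exact_mod_cast h)
  let Iv : ℝ≥0∞ → Set (Set E) := fun v =>
    {A | MeasurableSet A ∧ ∀ A', A' ⊆ A → MeasurableSet A' → ν A' ≤ P.op v (τ A')}
  have hIv_mono : ∀ {v w : ℝ≥0∞}, v ≤ w → Iv v ⊆ Iv w := by
    rintro v w hvw A ⟨hAm, hA⟩
    exact ⟨hAm, fun A' h1 h2 => (hA A' h1 h2).trans (P.mono_left (τ A') hvw)⟩
  have hIv_empty : ∀ v, (∅ : Set E) ∈ Iv v := by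
    intro v
    refine ⟨MeasurableSet.empty, fun A' h1 _ => ?_⟩
    rw [subset_empty_iff.mp h1, hν.1]
    exact zero_le
  have hIv_union : ∀ {v : ℝ≥0∞}, 0 < v → v < ⊤ → ∀ {ι : Type} [Countable ι]
      (A : ι → Set E), (∀ i, A i ∈ Iv v) → (⋃ i, A i) ∈ Iv v := by
    intro v hv0 hvt ι _ A hA
    refine ⟨MeasurableSet.iUnion (fun i => (hA i).1), ?_⟩
    intro A' hsub hA'm
    cases isEmpty_or_nonempty ι with
    | inl h =>
      rw [iUnion_of_empty] at hsub
      rw [subset_empty_iff.mp hsub, hν.1]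
      exact zero_le
    | inr h =>
      obtain ⟨f, hf⟩ := exists_surjective_nat ι
      have hA'eq : A' = ⋃ n, A' ∩ A (f n) := by
        rw [← inter_iUnion, hf.iUnion_comp, inter_eq_left.mpr hsub]
      have hmeasn : ∀ n, MeasurableSet (A' ∩ A (f n)) := fun n => hA'm.inter (hA (f n)).1
      calc ν A' = ⨆ n, ν (A' ∩ A (f n)) := by
            nth_rewrite 1 [hA'eq]
            exact hν.2 _ hmeasn
        _ ≤ ⨆ n, P.op v (τ (A' ∩ A (f n))) :=
            iSup_mono fun n => (hA (f n)).2 _ inter_subset_right (hmeasn n)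
        _ = P.op v (⨆ n, τ (A' ∩ A (f n))) := (op_iSup P hv0.ne' hvt.ne _).symm
        _ = P.op v (τ A') := by rw [← hτ.2 _ hmeasn, ← hA'eq]
  have hIv_sigma : ∀ {v : ℝ≥0∞}, 0 < v → v < ⊤ → IsSigmaIdeal (Iv v) := by
    intro v hv0 hvt
    refine ⟨⟨∅, hIv_empty v⟩, fun A hA => hA.1, fun B hB => hIv_union hv0 hvt B hB, ?_⟩
    rintro A B ⟨hBm, hB⟩ hAB hAm
    exact ⟨hAm, fun A' h1 h2 => hB A' (h1.trans hAB) h2⟩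
  have hch : ∀ q : Qrat, ∃ L ∈ Iv (vr q), ∀ S ∈ Iv (vr q), τ (S \ L) = 0 := fun q =>
    hσp _ (hIv_sigma (hvr_pos q) (hvr_top q))
  choose L₀ hL₀I hL₀null using hch
  let Lt : Qrat → Set E := fun q => ⋃ p : {p : Qrat // p ≤ q}, L₀ p.1
  have hLt_mem : ∀ q, Lt q ∈ Iv (vr q) := fun q =>
    hIv_union (hvr_pos q) (hvr_top q) _ (fun p => hIv_mono (hvr_mono p.2) (hL₀I p.1))
  have hLt_meas : ∀ q, MeasurableSet (Lt q) := fun q => (hLt_mem q).1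
  have hLt_bound : ∀ q (A' : Set E), A' ⊆ Lt q → MeasurableSet A' →
      ν A' ≤ P.op (vr q) (τ A') := fun q => (hLt_mem q).2
  have hLt_mono : ∀ {p q : Qrat}, p ≤ q → Lt p ⊆ Lt q := by
    intro p q hpq
    refine iUnion_subset fun r => ?_
    exact subset_iUnion_of_subset (⟨r.1, r.2.trans hpq⟩ : {p' : Qrat // p' ≤ q}) subset_rfl
  have hL₀Lt : ∀ q : Qrat, L₀ q ⊆ Lt q := fun q =>
    subset_iUnion_of_subset (⟨q, le_rfl⟩ : {p' : Qrat // p' ≤ q}) subset_rfl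
  have hLt_null : ∀ q, ∀ S ∈ Iv (vr q), τ (S \ Lt q) = 0 := by
    intro q S hS
    refine maxitive_null_of_le hτ ((hIv_sigma (hvr_pos q) (hvr_top q)).2.1 S hS |>.diff (hLt_meas q))
      (((hIv_sigma (hvr_pos q) (hvr_top q)).2.1 S hS).diff ((hL₀I q).1))
      (diff_subset_diff_right (hL₀Lt q)) (hL₀null q S hS)
  let c : E → ℝ≥0∞ := fun x => ⨅ q : Qrat, if x ∈ Lt q then vr q else ⊤
  have hc_meas : Measurable c :=
    Measurable.iInf fun q => Measurable.ite (hLt_meas q) measurable_const measurable_const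
  have c_le : ∀ (q : Qrat) x, x ∈ Lt q → c x ≤ vr q := fun q x h =>
    (iInf_le _ q).trans (by rw [if_pos h])
  have c_lt : ∀ x (β : ℝ≥0∞), c x < β → ∃ q, x ∈ Lt q ∧ vr q < β := by
    intro x β h
    obtain ⟨q, hq⟩ := iInf_lt_iff.mp h
    by_cases hx : x ∈ Lt q
    · exact ⟨q, hx, by rwa [if_pos hx] at hq⟩
    · rw [if_neg hx] at hq
      exact absurd hq not_top_lt
  have hDmeas : ∀ t : ℝ≥0∞, MeasurableSet {x | t < c x} := fun t =>
    hc_meas measurableSet_Ioi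
  have hIiomeas : ∀ u : ℝ≥0∞, MeasurableSet {x | c x < u} := fun u =>
    hc_meas measurableSet_Iio
  have hIcimeas : ∀ u : ℝ≥0∞, MeasurableSet {x | u ≤ c x} := fun u =>
    hc_meas measurableSet_Ici
  clear_value c Lt
  have klem : ∀ (q : Qrat) (A : Set E), MeasurableSet A → A ∩ Lt q = ∅ →
      ∀ s : ℝ≥0∞, 0 < s → s ≤ vr q → P.op s (τ A) ≤ ν A := by
    intro q A hAm hAL s hs0 hsq
    have hs_top : s < ⊤ := lt_of_le_of_lt hsq (hvr_top q)
    set H : Set (Set E) := {X | MeasurableSet X ∧ ∃ Y, MeasurableSet Y ∧ Y ⊆ A ∧ X ⊆ Y ∧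
      P.op s (τ Y) ≤ ν Y} with hH
    have hHsigma : IsSigmaIdeal H := by
      refine ⟨⟨∅, MeasurableSet.empty, ∅, MeasurableSet.empty, empty_subset _, subset_rfl, ?_⟩,
        fun X hX => hX.1, ?_, ?_⟩
      · rw [hτ.1, P.op_zero]
        exact zero_le
      · intro B hB
        refine ⟨MeasurableSet.iUnion (fun n => (hB n).1), ?_⟩
        choose Y hYm hYA hXY hYb using fun n => (hB n).2
        refine ⟨⋃ n, Y n, MeasurableSet.iUnion hYm, iUnion_subset hYA, iUnion_mono hXY, ?_⟩
        rw [hτ.2 _ hYm, op_iSup P hs0.ne' hs_top.ne, hν.2 _ hYm]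
        exact iSup_mono hYb
      · rintro X X' ⟨hX'm, Y, hYm, hYA, hXY, hYb⟩ hXX' hXm
        exact ⟨hXm, Y, hYm, hYA, hXX'.trans hXY, hYb⟩
    obtain ⟨M₀, hM₀H, hM₀null⟩ := hσp H hHsigma
    obtain ⟨hM₀m, M, hMm, hMA, hM₀M, hMb⟩ := hM₀H
    have hRmem : (A \ M) ∈ Iv s := by
      refine ⟨hAm.diff hMm, ?_⟩
      intro A'' hsub hA''m
      by_cases hgood : P.op s (τ A'') ≤ ν A''
      · have hA''H : A'' ∈ H := ⟨hA''m, A'', hA''m, hsub.trans diff_subset, subset_rfl, hgood⟩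
        have hz : τ (A'' \ M₀) = 0 := hM₀null A'' hA''H
        have heq : A'' \ M₀ = A'' := by
          rw [sdiff_eq_left, Set.disjoint_left]
          intro x hx hxM
          exact absurd (hM₀M hxM) (hsub hx).2
        have hτ0 : τ A'' = 0 := by rw [← heq]; exact hz
        have hν0 : ν A'' ≤ 0 := by
          have := hac A'' hA''m (by rw [hτ0]; exact ofinite_zero P)
          rwa [hτ0, P.op_zero] at this
        exact le_trans hν0 (zero_le)
      · exact (lt_of_not_ge hgood).le
    have hRq : (A \ M) ∈ Iv (vr q) := hIv_mono hsq hRmem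
    have hτR : τ (A \ M) = 0 := by
      have h1 := hLt_null q _ hRq
      have heq : (A \ M) \ Lt q = A \ M := by
        rw [sdiff_eq_left, Set.disjoint_left]
        intro x hx hxL
        have hmem : x ∈ A ∩ Lt q := ⟨hx.1, hxL⟩
        rw [hAL] at hmem
        exact hmem
      rwa [heq] at h1
    have hτA : τ A ≤ τ M := by
      conv_lhs => rw [(union_diff_cancel hMA).symm]
      rw [maxitive_union2 hτ hMm (hAm.diff hMm), hτR]
      simp
    calc P.op s (τ A) ≤ P.op s (τ M) := P.mono_right s hτA
      _ ≤ ν M := hMb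
      _ ≤ ν A := maxitive_mono hν hMm hAm hMA
  have goalB : ∀ B : Set E, MeasurableSet B → idemInt P τ c B ≤ ν B := by
    intro B hB
    rw [idemInt]
    refine iSup₂_le fun t ht => ?_
    rcases eq_or_ne t 0 with rfl | ht0
    · rw [P.zero_op]
      exact zero_le
    have hBD : MeasurableSet (B ∩ {x | t < c x}) := hB.inter (hDmeas t)
    refine op_le_of_lt P (pos_iff_ne_zero.mpr ht0) ?_
    intro s hs0 hst
    obtain ⟨r, hr, hr1, hr2⟩ := exists_rat_btwn' hst (hst.trans ht).ne
    set q : Qrat := ⟨r, hr⟩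
    have hempty : (B ∩ {x | t < c x}) ∩ Lt q = ∅ := by
      refine eq_empty_iff_forall_notMem.mpr ?_
      rintro x ⟨⟨hxB, hxt⟩, hxL⟩
      exact absurd hxt (not_lt.mpr ((c_le q x hxL).trans hr2.le))
    exact (klem q _ hBD hempty s hs0 hr1.le).trans
      (maxitive_mono hν hBD hB inter_subset_left)
  have hTprime : ∀ (B : Set E), MeasurableSet B → ∀ s : ℝ≥0∞, 0 < s →
      P.op s (τ (B ∩ {x | s ≤ c x})) ≤ idemInt P τ c B := by
    intro B hB s hs0
    refine op_le_of_lt P hs0 ?_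
    intro u hu0 hus
    have hsub : B ∩ {x | s ≤ c x} ⊆ B ∩ {x | u < c x} := by
      rintro x ⟨h1, h2⟩
      exact ⟨h1, lt_of_lt_of_le hus h2⟩
    refine le_trans (P.mono_right u (maxitive_mono hτ
      (hB.inter (hIcimeas _)) (hB.inter (hDmeas u)) hsub)) ?_
    rw [idemInt]
    exact le_iSup₂ (f := fun t (_ : t ∈ Iio (⊤:ℝ≥0∞)) => P.op t (τ (B ∩ {x | t < c x}))) u
      (lt_of_lt_of_le hus le_top)
  have lemP : ∀ (B : Set E), MeasurableSet B → idemInt P τ c B ≠ ⊤ →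
      ∀ (ε : ℝ≥0∞), 0 < ε → ∀ s : ℝ≥0∞, 0 < s → s < ⊤ →
      ∃ γ, s < γ ∧ ν (B ∩ {x | s ≤ c x ∧ c x < γ}) ≤ idemInt P τ c B + ε := by
    intro B hB hT ε hε s hs0 hstop
    set T := idemInt P τ c B with hTdef
    set y := τ (B ∩ {x | s ≤ c x}) with hy
    have hsy : P.op s y ≤ T := hTprime B hB s hs0
    have hU : {u : ℝ≥0∞ | P.op u y < T + ε} ∈ 𝓝 s := by
      have hco : ContinuousAt (fun u => P.op u y) s := op_contAt_left P hs0.ne' y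
      have hlt : P.op s y < T + ε := lt_of_le_of_lt hsy (ENNReal.lt_add_right hT hε.ne')
      exact hco.preimage_mem_nhds (Iio_mem_nhds hlt)
    obtain ⟨β, hsβ, hIco⟩ := exists_Ico_subset_of_mem_nhds hU ⟨⊤, hstop⟩
    obtain ⟨r, hr0, hr1, hr2⟩ := exists_rat_btwn' hsβ hstop.ne
    set q : Qrat := ⟨r, hr0⟩
    refine ⟨vr q, hr1, ?_⟩
    have hsubL : B ∩ {x | s ≤ c x ∧ c x < vr q} ⊆ Lt q := by
      rintro x ⟨hxB, hx1, hx2⟩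
      obtain ⟨p, hp, hpv⟩ := c_lt x _ hx2
      have hple : p ≤ q := by
        by_contra hpq
        push_neg at hpq
        exact absurd hpv (not_lt_of_ge (hvr_mono hpq.le))
      exact hLt_mono hple hp
    have hXm : MeasurableSet (B ∩ {x | s ≤ c x ∧ c x < vr q}) :=
      hB.inter ((hIcimeas _).inter
        (hIiomeas _))
    refine (hLt_bound q _ hsubL hXm).trans ?_
    have hτle : τ (B ∩ {x | s ≤ c x ∧ c x < vr q}) ≤ y := by
      rw [hy]
      refine maxitive_mono hτ hXm (hB.inter (hIcimeas _)) ?_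
      rintro x ⟨h1, h2, _⟩
      exact ⟨h1, h2⟩
    exact le_trans (P.mono_right _ hτle) (hIco ⟨hr1.le, hr2⟩).le
  have goalA0 : ∀ B : Set E, MeasurableSet B → P.OFinite (τ B) →
      ν B ≤ idemInt P τ c B := by
    intro B hB hBf
    set T := idemInt P τ c B with hTdef
    set X0 := B ∩ {x | c x = 0} with hX0def
    set Xinf := B ∩ {x | c x = ⊤} with hXinfdef
    have hX0m : MeasurableSet X0 := hB.inter (hc_meas (measurableSet_singleton 0))
    have hXinfm : MeasurableSet Xinf := hB.inter (hc_meas (measurableSet_singleton ⊤))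
    have hp1 : ν X0 = 0 := by
      have hsub : ∀ q : Qrat, X0 ⊆ Lt q := by
        intro q x hx
        obtain ⟨p, hp, hpv⟩ := c_lt x (vr q) (by rw [hx.2]; exact hvr_pos q)
        have hple : p ≤ q := by
          by_contra hpq
          push_neg at hpq
          exact absurd hpv (not_lt_of_ge (hvr_mono hpq.le))
        exact hLt_mono hple hp
      have hb : ∀ q : Qrat, ν X0 ≤ P.op (vr q) (τ B) := fun q =>
        (hLt_bound q _ (hsub q) hX0m).trans
          (P.mono_right _ (maxitive_mono hτ hX0m hB inter_subset_left))
      refine le_antisymm ?_ (zero_le)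
      rw [← hBf]
      refine le_iInf₂ fun s hs => ?_
      obtain ⟨r, hr0, hr1, hr2⟩ := exists_rat_btwn' (show (0:ℝ≥0∞) < s from hs) (by simp)
      exact (hb ⟨r, hr0⟩).trans (P.mono_left _ hr2.le)
    have hp2 : ν Xinf ≤ T := by
      have hfin : P.OFinite (τ Xinf) :=
        ofinite_mono P (maxitive_mono hτ hXinfm hB inter_subset_left) hBf
      refine (hac Xinf hXinfm hfin).trans ?_
      refine op_le_of_lt P (show (0:ℝ≥0∞) < ⊤ from ENNReal.zero_lt_top) ?_
      intro s hs0 hstop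
      have hsub : Xinf ⊆ B ∩ {x | s < c x} := by
        rintro x ⟨hxB, hxc⟩
        exact ⟨hxB, show s < c x by rw [show c x = ⊤ from hxc]; exact hstop⟩
      refine le_trans (P.mono_right s
        (maxitive_mono hτ hXinfm (hB.inter (hDmeas s)) hsub)) ?_
      rw [hTdef, idemInt]
      exact le_iSup₂ (f := fun t (_ : t ∈ Iio (⊤:ℝ≥0∞)) => P.op t (τ (B ∩ {x | t < c x})))
        s hstop
    have hp3 : ∀ (q : Qrat) (k : ℕ),
        ν (B ∩ Lt q ∩ {x | ((k:ℝ≥0∞)+1)⁻¹ < c x}) ≤ T := by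
      intro q k
      set t : ℝ≥0∞ := ((k:ℝ≥0∞)+1)⁻¹ with htdef
      have ht0 : 0 < t := ENNReal.inv_pos.mpr (by simp)
      set A := B ∩ Lt q ∩ {x | t < c x} with hAdef
      have hAm : MeasurableSet A := (hB.inter (hLt_meas q)).inter (hDmeas t)
      rcases eq_or_ne T ⊤ with hT | hT
      · rw [hT]; exact le_top
      refine ENNReal.le_of_forall_pos_le_add fun ε0 hε0 hTlt => ?_
      set ε : ℝ≥0∞ := (ε0 : ℝ≥0∞) with hεdef
      have hε : 0 < ε := ENNReal.coe_pos.mpr hε0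
      set w := vr q + 1 with hwdef
      have hwtop : w < ⊤ := ENNReal.add_lt_top.mpr ⟨hvr_top q, ENNReal.one_lt_top⟩
      have htw : t ≤ w := (ENNReal.inv_le_one.mpr le_add_self).trans le_add_self
      set S := {u : ℝ≥0∞ | u ∈ Icc t w ∧ ν (A ∩ {x | c x < u}) ≤ T + ε} with hSdef
      have htS : t ∈ S := by
        refine ⟨⟨le_rfl, htw⟩, ?_⟩
        have hem : A ∩ {x | c x < t} = ∅ := by
          refine eq_empty_iff_forall_notMem.mpr ?_
          rintro x ⟨⟨⟨hxB, hxL⟩, hxgt⟩, hxlt⟩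
          exact absurd (lt_trans (show t < c x from hxgt) (show c x < t from hxlt))
            (lt_irrefl _)
        rw [hem, hν.1]
        exact zero_le
      set u0 := sSup S with hu0def
      have hu0Icc : u0 ∈ Icc t w := ⟨le_sSup htS, sSup_le fun u hu => hu.1.2⟩
      have hu0top : u0 < ⊤ := lt_of_le_of_lt hu0Icc.2 hwtop
      have hu0S : u0 ∈ S := by
        refine ⟨hu0Icc, ?_⟩
        obtain ⟨useq, hmono, htend, hmem⟩ :=
          exists_seq_tendsto_sSup (⟨t, htS⟩ : S.Nonempty) (OrderTop.bddAbove S)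
        have hsupeq : (⨆ n, useq n) = u0 :=
          tendsto_nhds_unique (tendsto_atTop_iSup hmono) htend
        have hset : A ∩ {x | c x < u0} = ⋃ n, A ∩ {x | c x < useq n} := by
          ext x
          simp only [mem_inter_iff, mem_setOf_eq, mem_iUnion]
          constructor
          · rintro ⟨hxA, hxc⟩
            rw [← hsupeq] at hxc
            obtain ⟨n, hn⟩ := lt_iSup_iff.mp hxc
            exact ⟨n, hxA, hn⟩
          · rintro ⟨n, hxA, hn⟩
            exact ⟨hxA, lt_of_lt_of_le hn (le_trans (le_iSup useq n) hsupeq.le)⟩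
        rw [hset, hν.2 _ (fun n => hAm.inter (hIiomeas _))]
        exact iSup_le fun n => (hmem n).2
      have hu0w : u0 = w := by
        by_contra hne
        have hu0lt : u0 < w := lt_of_le_of_ne hu0Icc.2 hne
        obtain ⟨γ, hγ1, hγ2⟩ := lemP B hB hT ε hε u0 (lt_of_lt_of_le ht0 hu0Icc.1) hu0top
        have hmeas2 : MeasurableSet {x | u0 ≤ c x ∧ c x < γ} :=
          (hIcimeas _).inter (hIiomeas _)
        set u1 := min γ w with hu1def
        have hu1S : u1 ∈ S := by
          refine ⟨⟨le_min (hu0Icc.1.trans hγ1.le) (hu0Icc.1.trans hu0lt.le),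
            min_le_right _ _⟩, ?_⟩
          have hsplit : A ∩ {x | c x < u1} ⊆
              (A ∩ {x | c x < u0}) ∪ (B ∩ {x | u0 ≤ c x ∧ c x < γ}) := by
            rintro x ⟨hxA, hxc⟩
            rcases lt_or_ge (c x) u0 with h | h
            · exact Or.inl ⟨hxA, h⟩
            · exact Or.inr ⟨hxA.1.1, h, lt_of_lt_of_le hxc (min_le_left _ _)⟩
          refine le_trans (maxitive_mono hν (hAm.inter (hIiomeas _))
            ((hAm.inter (hIiomeas _)).union (hB.inter hmeas2)) hsplit) ?_
          rw [maxitive_union2 hν (hAm.inter (hIiomeas _)) (hB.inter hmeas2)]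
          exact sup_le hu0S.2 hγ2
        exact absurd (le_sSup hu1S) (not_le.mpr (lt_min hγ1 hu0lt))
      have hAfull : A ∩ {x | c x < w} = A := by
        refine inter_eq_left.mpr ?_
        rintro x ⟨⟨hxB, hxL⟩, hxt⟩
        exact lt_of_le_of_lt (c_le q x hxL)
          (by rw [hwdef]; exact ENNReal.lt_add_right (hvr_top q).ne one_ne_zero)
      have hfin := hu0S.2
      rw [hu0w, hAfull] at hfin
      exact hfin
    have hUm : MeasurableSet (⋃ p : Qrat × ℕ, B ∩ Lt p.1 ∩ {x | ((p.2:ℝ≥0∞)+1)⁻¹ < c x}) :=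
      MeasurableSet.iUnion fun p => (hB.inter (hLt_meas p.1)).inter (hDmeas _)
    have hfammeas : ∀ p : Qrat × ℕ,
        MeasurableSet (B ∩ Lt p.1 ∩ {x | ((p.2:ℝ≥0∞)+1)⁻¹ < c x}) := fun p =>
      (hB.inter (hLt_meas p.1)).inter (hDmeas _)
    have hνU : ν (⋃ p : Qrat × ℕ, B ∩ Lt p.1 ∩ {x | ((p.2:ℝ≥0∞)+1)⁻¹ < c x}) ≤ T := by
      rw [maxitive_iUnion hν
        (fun p : Qrat × ℕ => B ∩ Lt p.1 ∩ {x | ((p.2:ℝ≥0∞)+1)⁻¹ < c x}) hfammeas]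
      exact iSup_le fun p => hp3 p.1 p.2
    have hcover : B = X0 ∪ (Xinf ∪
        ⋃ p : Qrat × ℕ, B ∩ Lt p.1 ∩ {x | ((p.2:ℝ≥0∞)+1)⁻¹ < c x}) := by
      apply Subset.antisymm
      · intro x hx
        rcases eq_or_ne (c x) 0 with h0 | h0
        · exact Or.inl ⟨hx, h0⟩
        rcases eq_or_ne (c x) ⊤ with hT' | hT'
        · exact Or.inr (Or.inl ⟨hx, hT'⟩)
        · obtain ⟨q, hq, -⟩ := c_lt x ⊤ (lt_top_iff_ne_top.mpr hT')
          obtain ⟨n, hn⟩ := ENNReal.exists_inv_nat_lt h0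
          refine Or.inr (Or.inr (mem_iUnion.mpr ⟨(q, n), ⟨hx, hq⟩, ?_⟩))
          exact lt_of_le_of_lt (ENNReal.inv_le_inv.mpr (by simp)) hn
      · rintro x (⟨hx, -⟩ | (⟨hx, -⟩ | hx))
        · exact hx
        · exact hx
        · obtain ⟨p, hp⟩ := mem_iUnion.mp hx
          exact hp.1.1
    have hνeq : ν B = ν X0 ⊔ (ν Xinf ⊔
        ν (⋃ p : Qrat × ℕ, B ∩ Lt p.1 ∩ {x | ((p.2:ℝ≥0∞)+1)⁻¹ < c x})) := by
      conv_lhs => rw [hcover]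
      rw [maxitive_union2 hν hX0m (hXinfm.union hUm), maxitive_union2 hν hXinfm hUm]
    rw [hνeq, hp1]
    exact sup_le (zero_le) (sup_le hp2 hνU)
  have goalA : ∀ B : Set E, MeasurableSet B → ν B ≤ idemInt P τ c B := by
    intro B hB
    obtain ⟨F, hFm, hFU, hFf⟩ := hσf
    have hBeq : B = ⋃ n, B ∩ F n := by rw [← inter_iUnion, hFU, inter_univ]
    have hmeasn : ∀ n, MeasurableSet (B ∩ F n) := fun n => hB.inter (hFm n)
    calc ν B = ⨆ n, ν (B ∩ F n) := by
          nth_rewrite 1 [hBeq]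
          exact hν.2 _ hmeasn
      _ ≤ ⨆ n, idemInt P τ c (B ∩ F n) := iSup_mono fun n => goalA0 _ (hmeasn n)
          (ofinite_mono P (maxitive_mono hτ (hmeasn n) (hFm n) inter_subset_right) (hFf n))
      _ ≤ idemInt P τ c B := by
          refine iSup_le fun n => ?_
          rw [idemInt, idemInt]
          refine iSup₂_mono fun t _ => ?_
          exact P.mono_right t (maxitive_mono hτ ((hmeasn n).inter (hDmeas t))
            (hB.inter (hDmeas t)) (inter_subset_inter_left _ inter_subset_left))
  exact ⟨c, hc_meas, fun B hB => le_antisymm (goalA B hB) (goalB B hB)⟩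



end RNPAux
/-- The idempotent Radon–Nikodym theorem and its converse: for a non-degenerate
pseudo-multiplication `⊙`, a σ-maxitive measure `τ` has the Radon–Nikodym
property w.r.t. the idempotent `⊙`-integral iff it is σ-`⊙`-finite and
σ-principal. -/
theorem rnp_iff_sigmaOFinite_and_sigmaPrincipal
    {E : Type*} [MeasurableSpace E] (P : PseudoMul) (hP : P.Nondegenerate)
    (τ : Set E → ℝ≥0∞) (hτ : SigmaMaxitive τ) :
    HasRNP P τ ↔ SigmaOFinite P τ ∧ SigmaPrincipal τ := by
  constructor
  · intro hR
    exact ⟨RNPAux.nec_ofinite P hP τ hτ hR, RNPAux.nec_principal P τ hτ hR⟩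
  · rintro ⟨h1, h2⟩
    exact RNPAux.suff P τ hτ h1 h2
end

section
/- (Sugeno–Murofushi) Let ⊙ be a pseudo-multiplication on [0,∞], and let ν, τ be σ-maxitive measures on a measurable space (E, 𝔅). Assume that τ is σ-⊙-finite and σ-principal. Then ν ≪⊙ τ if and only if there exists a measurable map c : E → [0,∞] such that ν(B) = ∫_B c ⊙ dτ for all measurable sets B. -/
open scoped ENNReal
open Set

section SMAux

open Filter Topology Function

namespace SMAux

/-- The canonical embedding of the rationals into `ℝ≥0∞` (nonpositive ones go to `0`). -/
noncomputable def v (q : ℚ) : ℝ≥0∞ := (Real.toNNReal q : ℝ≥0∞)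

lemma v_lt_top (q : ℚ) : v q < ⊤ := ENNReal.coe_lt_top

lemma v_mono {q r : ℚ} (h : q ≤ r) : v q ≤ v r :=
  ENNReal.coe_le_coe.2 (Real.toNNReal_mono (by exact_mod_cast h))

lemma exists_v_btwn {a b : ℝ≥0∞} (h : a < b) : ∃ q : ℚ, a < v q ∧ v q < b := by
  obtain ⟨q, _, h1, h2⟩ := ENNReal.lt_iff_exists_rat_btwn.1 h
  exact ⟨q, h1, h2⟩

variable {E : Type*} [MeasurableSpace E]

lemma maxit_count {μ : Set E → ℝ≥0∞} (hμ : SigmaMaxitive μ) {ι : Type*} [Countable ι]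
    (A : ι → Set E) (hA : ∀ i, MeasurableSet (A i)) : μ (⋃ i, A i) = ⨆ i, μ (A i) := by
  cases isEmpty_or_nonempty ι with
  | inl h => simp [hμ.1]
  | inr h =>
    obtain ⟨f, hf⟩ := exists_surjective_nat ι
    rw [← hf.iUnion_comp A, hμ.2 _ fun n => hA (f n)]
    exact hf.iSup_comp fun i => μ (A i)

lemma maxit_mono {μ : Set E → ℝ≥0∞} (hμ : SigmaMaxitive μ) {A B : Set E}
    (hA : MeasurableSet A) (hB : MeasurableSet B) (hAB : A ⊆ B) : μ A ≤ μ B := by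
  have hU : (⋃ b : Bool, if b then A else B) = B := by
    ext x
    simp only [mem_iUnion]
    constructor
    · rintro ⟨b, hb⟩
      cases b
      · simpa using hb
      · exact hAB (by simpa using hb)
    · intro hx
      exact ⟨false, by simpa using hx⟩
  have hmeas : ∀ b : Bool, MeasurableSet (if b then A else B) := by
    intro b; cases b <;> simpa
  have h := maxit_count hμ (fun b : Bool => if b then A else B) hmeas
  rw [hU] at h
  rw [h]
  simpa using le_iSup (fun b : Bool => μ (if b then A else B)) true

lemma maxit_union2 {μ : Set E → ℝ≥0∞} (hμ : SigmaMaxitive μ) {A B : Set E}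
    (hA : MeasurableSet A) (hB : MeasurableSet B) : μ (A ∪ B) = μ A ⊔ μ B := by
  have hU : (⋃ b : Bool, if b then A else B) = A ∪ B := by
    ext x
    simp only [mem_iUnion, mem_union]
    constructor
    · rintro ⟨b, hb⟩
      cases b
      · exact Or.inr (by simpa using hb)
      · exact Or.inl (by simpa using hb)
    · rintro (h | h)
      · exact ⟨true, by simpa⟩
      · exact ⟨false, by simpa⟩
  have hmeas : ∀ b : Bool, MeasurableSet (if b then A else B) := by
    intro b; cases b <;> simpa
  rw [← hU, maxit_count hμ _ hmeas, iSup_bool_eq]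
  simp

lemma op_cont_right (P : PseudoMul) {t : ℝ≥0∞} (h0 : 0 < t) (ht : t < ⊤) :
    Continuous (P.op t) := by
  rw [continuous_iff_continuousAt]
  intro u
  have hopen : IsOpen ((Ioo (0:ℝ≥0∞) ⊤) ×ˢ (univ : Set ℝ≥0∞)) := isOpen_Ioo.prod isOpen_univ
  have h1 : ContinuousAt (fun p : ℝ≥0∞ × ℝ≥0∞ => P.op p.1 p.2) (t, u) :=
    P.continuousOn.continuousAt (hopen.mem_nhds (mem_prod.2 ⟨⟨h0, ht⟩, mem_univ u⟩))
  exact h1.comp ((continuous_const.prodMk continuous_id).continuousAt)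

lemma op_iSup (P : PseudoMul) {t : ℝ≥0∞} (h0 : 0 < t) (ht : t < ⊤) {ι : Sort*} (g : ι → ℝ≥0∞) :
    P.op t (⨆ i, g i) = ⨆ i, P.op t (g i) :=
  Monotone.map_iSup_of_continuousAt ((op_cont_right P h0 ht).continuousAt) (P.mono_right t)
    (by simpa using P.op_zero t)

lemma op_tendsto_left (P : PseudoMul) (a : ℝ≥0∞) {t : ℝ≥0∞} (h0 : 0 < t)
    {s : ℕ → ℝ≥0∞} (hs : ∀ n, 0 < s n) (hlim : Tendsto s atTop (𝓝 t)) :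
    Tendsto (fun n => P.op (s n) a) atTop (𝓝 (P.op t a)) := by
  have hc : ContinuousWithinAt (fun x => P.op x a) (Ioi 0) t :=
    P.continuousOn_left a t h0
  have h2 : Tendsto s atTop (𝓝[Ioi (0:ℝ≥0∞)] t) :=
    tendsto_nhdsWithin_iff.2 ⟨hlim, Eventually.of_forall hs⟩
  exact hc.tendsto.comp h2

lemma exists_rat_seq_gt {t : ℝ≥0∞} (ht : t < ⊤) :
    ∃ w : ℕ → ℚ, (∀ n, t < v (w n)) ∧ Tendsto (fun n => v (w n)) atTop (𝓝 t) := by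
  obtain ⟨b, _, hmem, hlim⟩ := exists_seq_strictAnti_tendsto' ht
  choose w hw1 hw2 using fun n => exists_v_btwn (hmem n).1
  exact ⟨w, hw1, tendsto_of_tendsto_of_tendsto_of_le_of_le tendsto_const_nhds hlim
    (fun n => (hw1 n).le) (fun n => (hw2 n).le)⟩

lemma exists_rat_seq_lt {t : ℝ≥0∞} (ht : 0 < t) :
    ∃ u : ℕ → ℚ, (∀ n, 0 < v (u n)) ∧ (∀ n, v (u n) < t) ∧
      Tendsto (fun n => v (u n)) atTop (𝓝 t) := by
  obtain ⟨b, _, hmem, hlim⟩ := exists_seq_strictMono_tendsto' ht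
  choose u hu1 hu2 using fun n => exists_v_btwn (hmem n).2
  refine ⟨u, fun n => lt_trans (hmem n).1 (hu1 n), hu2, ?_⟩
  exact tendsto_of_tendsto_of_tendsto_of_le_of_le hlim tendsto_const_nhds
    (fun n => (hu1 n).le) (fun n => (hu2 n).le)

theorem exists_density {E : Type*} [MeasurableSpace E] (P : PseudoMul)
    (ν τ : Set E → ℝ≥0∞) (hν : SigmaMaxitive ν) (hτ : SigmaMaxitive τ)
    (hfin : SigmaOFinite P τ) (hprin : SigmaPrincipal τ) (hac : OAbsCont P ν τ) :
    ∃ c : E → ℝ≥0∞, Measurable c ∧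
      ∀ B : Set E, MeasurableSet B → ν B = idemInt P τ c B := by
  classical
  obtain ⟨Ecov, hEmeas, hEuniv, hEfin⟩ := hfin
  -- `⊙`-finiteness is downward closed
  have hOF : ∀ {a b : ℝ≥0∞}, a ≤ b → P.OFinite b → P.OFinite a := by
    intro a b hab hb
    refine le_antisymm (le_trans ?_ (le_of_eq hb)) (zero_le)
    exact iInf_mono fun s => iInf_mono fun _ => P.mono_right s hab
  -- absolute continuity holds with no finiteness restriction
  have hacT : ∀ B, MeasurableSet B → ν B ≤ P.op ⊤ (τ B) := by
    intro B hB
    have hBsplit : B = ⋃ n, B ∩ Ecov n := by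
      rw [← inter_iUnion, hEuniv, inter_univ]
    have hmeasn : ∀ n, MeasurableSet (B ∩ Ecov n) := fun n => hB.inter (hEmeas n)
    calc ν B = ⨆ n, ν (B ∩ Ecov n) := by rw [← hν.2 _ hmeasn, ← hBsplit]
      _ ≤ P.op ⊤ (τ B) := by
        refine iSup_le fun n => ?_
        have h1 : P.OFinite (τ (B ∩ Ecov n)) :=
          hOF (maxit_mono hτ (hmeasn n) (hEmeas n) inter_subset_right) (hEfin n)
        exact (hac _ (hmeasn n) h1).trans
          (P.mono_right ⊤ (maxit_mono hτ (hmeasn n) hB inter_subset_left))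
  have hnull : ∀ B, MeasurableSet B → τ B = 0 → ν B = 0 := by
    intro B hB h0
    have h := hacT B hB
    rw [h0, P.op_zero] at h
    exact le_antisymm h (zero_le)
  -- the fundamental σ-ideals
  set Idl : ℝ≥0∞ → Set (Set E) :=
    fun s => {A | MeasurableSet A ∧ ∀ C, C ⊆ A → MeasurableSet C → ν C ≤ P.op s (τ C)}
    with hIdl_def
  have hIdl : ∀ s, IsSigmaIdeal (Idl s) := by
    intro s
    refine ⟨⟨∅, MeasurableSet.empty, fun C hC _ => ?_⟩, fun A hA => hA.1, ?_, ?_⟩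
    · rw [subset_empty_iff.1 hC, hν.1]; exact zero_le
    · intro Bn hBn
      refine ⟨MeasurableSet.iUnion fun n => (hBn n).1, fun C hC hCm => ?_⟩
      have hmeasn : ∀ n, MeasurableSet (C ∩ Bn n) := fun n => hCm.inter (hBn n).1
      have hCeq : C = ⋃ n, C ∩ Bn n := by
        rw [← inter_iUnion]; exact (inter_eq_left.2 hC).symm
      calc ν C = ⨆ n, ν (C ∩ Bn n) := by rw [← hν.2 _ hmeasn, ← hCeq]
        _ ≤ P.op s (τ C) := iSup_le fun n =>
            ((hBn n).2 _ inter_subset_right (hmeasn n)).trans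
              (P.mono_right s (maxit_mono hτ (hmeasn n) hCm inter_subset_left))
    · intro A B hB hAB hAm
      exact ⟨hAm, fun C hC hCm => hB.2 C (hC.trans hAB) hCm⟩
  have hImono : ∀ {s s' : ℝ≥0∞}, s ≤ s' → Idl s ⊆ Idl s' := by
    intro s s' h A hA
    exact ⟨hA.1, fun C hC hCm => (hA.2 C hC hCm).trans (P.mono_left (τ C) h)⟩
  choose L hLmem hLmax using fun q : ℚ => hprin (Idl (v q)) (hIdl (v q))
  obtain ⟨e, he⟩ := exists_surjective_nat ℚ
  set M : ℚ → Set E := fun q => ⋃ n, if e n ≤ q then L (e n) else ∅ with hMdef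
  have hMmeas : ∀ q, MeasurableSet (M q) := by
    intro q
    refine MeasurableSet.iUnion fun n => ?_
    by_cases h : e n ≤ q
    · simpa [h] using (hLmem (e n)).1
    · simp [h]
  have hLM : ∀ q, L q ⊆ M q := by
    intro q x hx
    obtain ⟨n, hn⟩ := he q
    exact mem_iUnion.2 ⟨n, by simp [hn, hx]⟩
  have hMmono : ∀ {q r : ℚ}, q ≤ r → M q ⊆ M r := by
    intro q r hqr x hx
    obtain ⟨n, hn⟩ := mem_iUnion.1 hx
    by_cases h : e n ≤ q
    · refine mem_iUnion.2 ⟨n, ?_⟩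
      rw [if_pos (h.trans hqr)]
      simpa [h] using hn
    · simp [h] at hn
  have hMmem : ∀ q, M q ∈ Idl (v q) := by
    intro q
    refine (hIdl (v q)).2.2.1 _ fun n => ?_
    by_cases h : e n ≤ q
    · simpa [h] using hImono (v_mono h) (hLmem (e n))
    · simp only [if_neg h]
      exact (hIdl (v q)).2.2.2 ∅ (L q) (hLmem q) (empty_subset _) MeasurableSet.empty
  have K1 : ∀ (q : ℚ) (C : Set E), C ⊆ M q → MeasurableSet C → ν C ≤ P.op (v q) (τ C) :=
    fun q => (hMmem q).2
  have hMmax : ∀ (q : ℚ), ∀ S ∈ Idl (v q), τ (S \ M q) = 0 := by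
    intro q S hS
    refine le_antisymm ?_ (zero_le)
    calc τ (S \ M q) ≤ τ (S \ L q) :=
        maxit_mono hτ (hS.1.diff (hMmeas q)) (hS.1.diff (hLmem q).1)
          (diff_subset_diff_right (hLM q))
      _ = 0 := hLmax q S hS
  -- key lower estimate on the complement of `M q`
  have lemA : ∀ q : ℚ, 0 < v q → ∀ A, MeasurableSet A → A ∩ M q = ∅ →
      P.op (v q) (τ A) ≤ ν A := by
    intro q hq A hA hdisj
    set J : Set (Set E) := {C | MeasurableSet C ∧ C ⊆ A ∧ P.op (v q) (τ C) ≤ ν A} with hJdef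
    have hJideal : IsSigmaIdeal J := by
      refine ⟨⟨∅, MeasurableSet.empty, empty_subset _, ?_⟩, fun C hC => hC.1, ?_, ?_⟩
      · rw [hτ.1, P.op_zero]; exact zero_le
      · intro Bn hBn
        refine ⟨MeasurableSet.iUnion fun n => (hBn n).1, iUnion_subset fun n => (hBn n).2.1, ?_⟩
        rw [hτ.2 _ fun n => (hBn n).1, op_iSup P hq (v_lt_top q)]
        exact iSup_le fun n => (hBn n).2.2
      · intro C D hD hCD hCm
        exact ⟨hCm, hCD.trans hD.2.1,
          (P.mono_right _ (maxit_mono hτ hCm hD.1 hCD)).trans hD.2.2⟩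
    obtain ⟨N, hN, hNmax⟩ := hprin J hJideal
    have hANmem : A \ N ∈ Idl (v q) := by
      refine ⟨hA.diff hN.1, fun C hC hCm => ?_⟩
      by_cases h : P.op (v q) (τ C) ≤ ν A
      · have hCJ : C ∈ J := ⟨hCm, hC.trans diff_subset, h⟩
        have hCN : C \ N = C :=
          subset_antisymm diff_subset fun x hx => ⟨hx, fun hxN => (hC hx).2 hxN⟩
        have hτC : τ C = 0 := by rw [← hCN]; exact hNmax C hCJ
        rw [hnull C hCm hτC]
        exact zero_le
      · push_neg at h
        exact (maxit_mono hν hCm hA (hC.trans diff_subset)).trans h.le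
    have hANnull : τ (A \ N) = 0 := by
      have h1 := hMmax q _ hANmem
      have h2 : (A \ N) \ M q = A \ N := by
        refine subset_antisymm diff_subset fun x hx => ⟨hx, fun hxM => ?_⟩
        exact (eq_empty_iff_forall_notMem.1 hdisj x) ⟨hx.1, hxM⟩
      rwa [h2] at h1
    have hNA : N ⊆ A := hN.2.1
    have hτA : τ A = τ N := by
      calc τ A = τ (N ∪ A \ N) := by rw [union_diff_cancel hNA]
        _ = τ N ⊔ τ (A \ N) := maxit_union2 hτ hN.1 (hA.diff hN.1)
        _ = τ N := by rw [hANnull, sup_eq_left.2 (zero_le)]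
    rw [hτA]
    exact hN.2.2
  -- the density
  set c : E → ℝ≥0∞ := fun x => ⨅ (q : ℚ) (_ : x ∈ M q), v q with hcdef
  have hceval : c = fun x => ⨅ q : ℚ, (if x ∈ M q then v q else ⊤) := by
    funext x
    refine iInf_congr fun q => ?_
    by_cases h : x ∈ M q
    · rw [iInf_pos h, if_pos h]
    · rw [iInf_neg h, if_neg h]
  have hcmeas : Measurable c := by
    rw [hceval]
    exact Measurable.iInf fun q => Measurable.ite (hMmeas q) measurable_const measurable_const
  have hcM : ∀ (q : ℚ) x, x ∈ M q → c x ≤ v q := fun q x hx => iInf₂_le q hx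
  have hcM' : ∀ (q : ℚ) x, c x < v q → x ∈ M q := by
    intro q x h
    obtain ⟨r, hr⟩ := iInf_lt_iff.1 h
    have hxr : x ∈ M r := by
      by_contra hxr
      rw [iInf_neg hxr] at hr
      exact not_top_lt hr
    rw [iInf_pos hxr] at hr
    have hrq : r ≤ q := by
      by_contra hrq
      exact absurd (v_mono (le_of_not_ge hrq)) (not_le.2 hr)
    exact hMmono hrq hxr
  have hgt : ∀ (t : ℝ≥0∞) x, t < c x ↔ ∃ q : ℚ, t < v q ∧ x ∉ M q := by
    intro t x
    constructor
    · intro h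
      obtain ⟨q, hq1, hq2⟩ := exists_v_btwn h
      exact ⟨q, hq1, fun hx => absurd (hcM q x hx) (not_le.2 hq2)⟩
    · rintro ⟨q, hq1, hq2⟩
      refine lt_of_lt_of_le hq1 (le_iInf fun r => le_iInf fun hxr => ?_)
      have hqr : q ≤ r := by
        by_contra h
        exact hq2 (hMmono (le_of_not_ge h) hxr)
      exact v_mono hqr
  have hGt : ∀ t : ℝ≥0∞, {x | t < c x} = ⋃ q : ℚ, if t < v q then (M q)ᶜ else ∅ := by
    intro t
    ext x
    rw [mem_setOf_eq, hgt t x, mem_iUnion]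
    constructor
    · rintro ⟨q, h1, h2⟩
      exact ⟨q, by simp [h1, h2]⟩
    · rintro ⟨q, hq⟩
      by_cases h : t < v q
      · exact ⟨q, h, by simpa [h] using hq⟩
      · simp [h] at hq
  have hGtmeas : ∀ t : ℝ≥0∞, MeasurableSet {x | t < c x} := fun t => hcmeas measurableSet_Ioi
  have hLtmeas : ∀ b : ℝ≥0∞, MeasurableSet {x | c x < b} := fun b => hcmeas measurableSet_Iio
  -- lower bound: each term of the integral is at most `ν B`
  have lower : ∀ B, MeasurableSet B → ∀ t : ℝ≥0∞, t < ⊤ →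
      P.op t (τ (B ∩ {x | t < c x})) ≤ ν B := by
    intro B hB t ht
    rcases eq_or_lt_of_le ((zero_le : 0 ≤ t)) with h0 | h0
    · rw [← h0, P.zero_op]; exact zero_le
    have hset : B ∩ {x | t < c x} = ⋃ q : ℚ, B ∩ (if t < v q then (M q)ᶜ else ∅) := by
      rw [hGt t, inter_iUnion]
    have hmeasq : ∀ q : ℚ, MeasurableSet (B ∩ (if t < v q then (M q)ᶜ else ∅)) := by
      intro q
      by_cases h : t < v q
      · simpa [h] using hB.inter (hMmeas q).compl
      · simp [h]
    rw [hset, maxit_count hτ _ hmeasq, op_iSup P h0 ht]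
    refine iSup_le fun q => ?_
    by_cases h : t < v q
    · simp only [if_pos h]
      have hdisj : (B ∩ (M q)ᶜ) ∩ M q = ∅ := by
        ext x
        simp only [mem_inter_iff, mem_compl_iff, mem_empty_iff_false, iff_false, not_and]
        tauto
      have h2 := lemA q (lt_of_le_of_lt ((zero_le : 0 ≤ t)) h) (B ∩ (M q)ᶜ)
        (hB.inter (hMmeas q).compl) hdisj
      calc P.op t (τ (B ∩ (M q)ᶜ)) ≤ P.op (v q) (τ (B ∩ (M q)ᶜ)) := P.mono_left _ h.le
        _ ≤ ν (B ∩ (M q)ᶜ) := h2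
        _ ≤ ν B := maxit_mono hν (hB.inter (hMmeas q).compl) hB inter_subset_left
    · simp only [if_neg h, inter_empty, hτ.1, P.op_zero]
      exact zero_le
  -- upper bound
  have hRterm : ∀ (B : Set E) (t : ℝ≥0∞), t < ⊤ →
      P.op t (τ (B ∩ {x | t < c x})) ≤ idemInt P τ c B := by
    intro B t ht
    exact le_iSup₂ (f := fun t (_ : t ∈ Iio (⊤:ℝ≥0∞)) => P.op t (τ (B ∩ {x | t < c x}))) t ht
  have hRmono : ∀ B B' : Set E, MeasurableSet B → MeasurableSet B' → B ⊆ B' →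
      idemInt P τ c B ≤ idemInt P τ c B' := by
    intro B B' hB hB' hsub
    exact iSup₂_mono fun t _ => P.mono_right t (maxit_mono hτ (hB.inter (hGtmeas t))
      (hB'.inter (hGtmeas t)) (inter_subset_inter_left _ hsub))
  have hfinB : ∀ B, MeasurableSet B → P.OFinite (τ B) → ν B ≤ idemInt P τ c B := by
    intro B hB hBfin
    set Binf := B \ ⋃ q : ℚ, M q with hBinf
    have hBinfmeas : MeasurableSet Binf := hB.diff (MeasurableSet.iUnion fun q => hMmeas q)
    have hqmeas : ∀ q : ℚ, MeasurableSet (B ∩ M q) := fun q => hB.inter (hMmeas q)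
    have hcover : B = Binf ∪ ⋃ q : ℚ, B ∩ M q := by
      ext x
      constructor
      · intro hx
        by_cases h : x ∈ ⋃ q : ℚ, M q
        · obtain ⟨q, hq⟩ := mem_iUnion.1 h
          exact Or.inr (mem_iUnion.2 ⟨q, hx, hq⟩)
        · exact Or.inl ⟨hx, h⟩
      · rintro (hx | hx)
        · exact hx.1
        · obtain ⟨q, hq⟩ := mem_iUnion.1 hx
          exact hq.1
    have hνB : ν B = ν Binf ⊔ ⨆ q : ℚ, ν (B ∩ M q) := by
      calc ν B = ν (Binf ∪ ⋃ q : ℚ, B ∩ M q) := by rw [← hcover]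
        _ = ν Binf ⊔ ν (⋃ q : ℚ, B ∩ M q) :=
            maxit_union2 hν hBinfmeas (MeasurableSet.iUnion hqmeas)
        _ = ν Binf ⊔ ⨆ q : ℚ, ν (B ∩ M q) := by rw [maxit_count hν _ hqmeas]
    rw [hνB]
    refine sup_le ?_ (iSup_le fun q => ?_)
    · -- the part where `c = ∞`
      have hsub : ∀ t : ℝ≥0∞, t < ⊤ → Binf ⊆ B ∩ {x | t < c x} := by
        intro t ht x hx
        refine ⟨hx.1, ?_⟩
        obtain ⟨q, hq1, _⟩ := exists_v_btwn ht
        exact (hgt t x).2 ⟨q, hq1, fun hM => hx.2 (mem_iUnion.2 ⟨q, hM⟩)⟩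
      have hseq : Tendsto (fun n : ℕ => P.op ((n + 1 : ℕ) : ℝ≥0∞) (τ Binf)) atTop
          (𝓝 (P.op ⊤ (τ Binf))) := by
        refine op_tendsto_left P (τ Binf) ?_ (fun n => ?_) ?_
        · exact ENNReal.zero_lt_top
        · exact_mod_cast Nat.succ_pos n
        · exact ENNReal.tendsto_nat_nhds_top.comp (tendsto_add_atTop_nat 1)
      refine le_trans (hacT Binf hBinfmeas) (le_of_tendsto' hseq fun n => ?_)
      have hnt : ((n + 1 : ℕ) : ℝ≥0∞) < ⊤ := ENNReal.natCast_lt_top _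
      calc P.op ((n + 1 : ℕ) : ℝ≥0∞) (τ Binf)
          ≤ P.op ((n + 1 : ℕ) : ℝ≥0∞) (τ (B ∩ {x | ((n + 1 : ℕ) : ℝ≥0∞) < c x})) :=
            P.mono_right _ (maxit_mono hτ hBinfmeas (hB.inter (hGtmeas _)) (hsub _ hnt))
        _ ≤ idemInt P τ c B := hRterm B _ hnt
    · -- the piece `B ∩ M q`
      set A := B ∩ M q with hAdef
      have hAmeas : MeasurableSet A := hqmeas q
      set m := ν A with hmdef
      set φ : ℚ → ℝ≥0∞ := fun w => ν (A ∩ {x | c x < v w}) with hφdef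
      have hφmeas : ∀ w : ℚ, MeasurableSet (A ∩ {x | c x < v w}) :=
        fun w => hAmeas.inter (hLtmeas (v w))
      have hφle : ∀ w, φ w ≤ m :=
        fun w => maxit_mono hν (hφmeas w) hAmeas inter_subset_left
      have hφtop : ∀ w : ℚ, v q < v w → φ w = m := by
        intro w hw
        have h : A ∩ {x | c x < v w} = A :=
          inter_eq_left.2 fun x hx => lt_of_le_of_lt (hcM q x hx.2) hw
        show ν (A ∩ {x | c x < v w}) = m
        rw [h]
      set tstar : ℝ≥0∞ := ⨅ (w : ℚ) (_ : φ w = m), v w with htstar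
      have htstar_top : tstar < ⊤ := by
        obtain ⟨w, hw1, hw2⟩ := exists_v_btwn (v_lt_top q)
        exact lt_of_le_of_lt (iInf₂_le w (hφtop w hw1)) hw2
      have hup : ∀ w w' : ℚ, φ w = m → v w ≤ v w' → φ w' = m := by
        intro w w' hw hle
        refine le_antisymm (hφle w') ?_
        rw [← hw]
        exact maxit_mono hν (hφmeas w) (hφmeas w')
          (inter_subset_inter_right _ fun x hx => lt_of_lt_of_le hx hle)
      have hC1 : ∀ w : ℚ, tstar < v w → φ w = m := by
        intro w hw
        obtain ⟨w', hw'⟩ := iInf_lt_iff.1 hw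
        have h1 : φ w' = m := by
          by_contra h
          rw [iInf_neg h] at hw'
          exact not_top_lt hw'
        rw [iInf_pos h1] at hw'
        exact hup w' w h1 hw'.le
      rcases eq_or_ne tstar 0 with h0 | h0
      · -- degenerate case: `m = 0`
        have hm0 : m ≤ ⨅ s ∈ Ioi (0:ℝ≥0∞), P.op s (τ B) := by
          refine le_iInf₂ fun s hs => ?_
          obtain ⟨w, hw0, hws⟩ := exists_v_btwn hs
          have hφw : φ w = m := hC1 w (by rw [h0]; exact hw0)
          calc m = ν (A ∩ {x | c x < v w}) := hφw.symm
            _ ≤ P.op (v w) (τ (A ∩ {x | c x < v w})) :=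
                K1 w _ (fun x hx => hcM' w x hx.2) (hφmeas w)
            _ ≤ P.op (v w) (τ B) :=
                P.mono_right _ (maxit_mono hτ (hφmeas w) hB (fun x hx => hx.1.1))
            _ ≤ P.op s (τ B) := P.mono_left _ hws.le
        rw [hBfin] at hm0
        exact le_trans hm0 (zero_le)
      · have htstar_pos : 0 < tstar := pos_iff_ne_zero.2 h0
        obtain ⟨w, hwgt, hwlim⟩ := exists_rat_seq_gt htstar_top
        obtain ⟨u, hupos, hult, hulim⟩ := exists_rat_seq_lt htstar_pos
        set g : ℕ → ℝ≥0∞ := fun k => τ (B ∩ {x | v (u k) < c x}) with hgdef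
        have step1 : ∀ n k, m ≤ P.op (v (w n)) (g k) := by
          intro n k
          obtain ⟨r, hr1, hr2⟩ := exists_v_btwn (hult k)
          have hφr : φ r ≠ m := by
            intro h
            exact absurd (iInf₂_le r h) (not_le.2 hr2)
          set S := (A ∩ {x | c x < v (w n)}) ∩ {x | c x < v r}ᶜ with hSdef
          have hSmeas : MeasurableSet S := (hφmeas (w n)).inter (hLtmeas (v r)).compl
          have hsplitS : A ∩ {x | c x < v (w n)} = (A ∩ {x | c x < v r}) ∪ S := by
            ext x
            constructor
            · intro hx
              by_cases h : c x < v r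
              · exact Or.inl ⟨hx.1, h⟩
              · exact Or.inr ⟨hx, h⟩
            · rintro (hx | hx)
              · exact ⟨hx.1, lt_trans hx.2 (lt_trans hr2 (hwgt n))⟩
              · exact hx.1
          have hφwn : φ (w n) = m := hC1 (w n) (hwgt n)
          have hmax : m = φ r ⊔ ν S := by
            rw [← hφwn]
            show ν (A ∩ {x | c x < v (w n)}) = ν (A ∩ {x | c x < v r}) ⊔ ν S
            rw [hsplitS]
            exact maxit_union2 hν (hφmeas r) hSmeas
          have hνS : m ≤ ν S := by
            by_cases h : m ≤ ν S
            · exact h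
            · push_neg at h
              have h2 : φ r ⊔ ν S < m := max_lt (lt_of_le_of_ne (hφle r) hφr) h
              rw [← hmax] at h2
              exact absurd h2 (lt_irrefl m)
          have hSsubM : S ⊆ M (w n) := fun x hx => hcM' (w n) x hx.1.2
          have hSsubg : S ⊆ B ∩ {x | v (u k) < c x} := by
            intro x hx
            refine ⟨hx.1.1.1, ?_⟩
            exact lt_of_lt_of_le hr1 (not_lt.1 hx.2)
          calc m ≤ ν S := hνS
            _ ≤ P.op (v (w n)) (τ S) := K1 (w n) S hSsubM hSmeas
            _ ≤ P.op (v (w n)) (g k) := P.mono_right _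
                (maxit_mono hτ hSmeas (hB.inter (hGtmeas _)) hSsubg)
        have step2 : ∀ k, m ≤ P.op tstar (g k) := by
          intro k
          have htend := op_tendsto_left P (g k) htstar_pos
            (fun n => lt_trans htstar_pos (hwgt n)) hwlim
          exact ge_of_tendsto' htend fun n => step1 n k
        set ell : ℝ≥0∞ := ⨅ k, g k with helldef
        set G : ℕ → ℝ≥0∞ := fun k => (Finset.range (k + 1)).inf g with hGdef
        have hGanti : Antitone G := fun k k' h =>
          Finset.inf_mono (Finset.range_subset_range.2 (by omega))
        have hGinf : ⨅ k, G k = ell := by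
          apply le_antisymm
          · refine le_iInf fun k => ?_
            exact le_trans (iInf_le G k) (Finset.inf_le (Finset.self_mem_range_succ k))
          · exact le_iInf fun k => Finset.le_inf fun j _ => iInf_le g j
        have step3 : m ≤ P.op tstar ell := by
          have h1 : Tendsto G atTop (𝓝 ell) := hGinf ▸ tendsto_atTop_iInf hGanti
          have htendG : Tendsto (fun k => P.op tstar (G k)) atTop (𝓝 (P.op tstar ell)) :=
            ((op_cont_right P htstar_pos htstar_top).continuousAt.tendsto).comp h1
          refine ge_of_tendsto' htendG fun k => ?_
          obtain ⟨j, _, hjeq⟩ := Finset.exists_mem_eq_inf (Finset.range (k + 1))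
            (by simp) g
          show m ≤ P.op tstar (G k)
          rw [show G k = g j from hjeq]
          exact step2 j
        have step4 : P.op tstar ell ≤ idemInt P τ c B := by
          have h1 : ∀ k, P.op (v (u k)) ell ≤ idemInt P τ c B := by
            intro k
            calc P.op (v (u k)) ell ≤ P.op (v (u k)) (g k) := P.mono_right _ (iInf_le g k)
              _ ≤ idemInt P τ c B := hRterm B (v (u k)) (v_lt_top (u k))
          have htend := op_tendsto_left P ell htstar_pos hupos hulim
          exact le_of_tendsto' htend h1
        exact step3.trans step4
  refine ⟨c, hcmeas, fun B hB => le_antisymm ?_ ?_⟩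
  · -- ν B ≤ integral
    have hBsplit : B = ⋃ n, B ∩ Ecov n := by rw [← inter_iUnion, hEuniv, inter_univ]
    have hmeasn : ∀ n, MeasurableSet (B ∩ Ecov n) := fun n => hB.inter (hEmeas n)
    calc ν B = ⨆ n, ν (B ∩ Ecov n) := by rw [← hν.2 _ hmeasn, ← hBsplit]
      _ ≤ idemInt P τ c B := iSup_le fun n =>
          (hfinB _ (hmeasn n) (hOF (maxit_mono hτ (hmeasn n) (hEmeas n) inter_subset_right)
            (hEfin n))).trans (hRmono _ _ (hmeasn n) hB inter_subset_left)
  · -- integral ≤ ν B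
    exact iSup₂_le fun t ht => lower B hB t ht

end SMAux

end SMAux

/-- The Sugeno–Murofushi idempotent Radon–Nikodym theorem. -/
theorem sugeno_murofushi
    {E : Type*} [MeasurableSpace E] (P : PseudoMul)
    (ν τ : Set E → ℝ≥0∞) (hν : SigmaMaxitive ν) (hτ : SigmaMaxitive τ)
    (hfin : SigmaOFinite P τ) (hprin : SigmaPrincipal τ) :
    OAbsCont P ν τ ↔
      ∃ c : E → ℝ≥0∞, Measurable c ∧
        ∀ B : Set E, MeasurableSet B → ν B = idemInt P τ c B := by
  constructor
  · intro hac
    exact SMAux.exists_density P ν τ hν hτ hfin hprin hac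
  · rintro ⟨c, hcmeas, hrep⟩
    intro B hB _
    rw [hrep B hB]
    simp only [idemInt]
    refine iSup₂_le fun t _ => ?_
    calc P.op t (τ (B ∩ {x | t < c x})) ≤ P.op ⊤ (τ (B ∩ {x | t < c x})) :=
        P.mono_left _ le_top
      _ ≤ P.op ⊤ (τ B) := P.mono_right _ (SMAux.maxit_mono hτ
          (hB.inter (hcmeas measurableSet_Ioi)) hB inter_subset_left)
end

section
/- Let τ be a σ-maxitive measure on a measurable space (E, 𝔅). Then τ satisfies the Radon–Nikodym property with respect to the Shilkret integral if and only if τ is σ-finite and σ-principal. -/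
open scoped ENNReal
open Set

/-- The Shilkret integral `⨆_{t ∈ (0,∞)} t * ν(B ∩ {f > t})`. -/
noncomputable def shilkretInt {E : Type*} [MeasurableSpace E] (ν : Set E → ℝ≥0∞)
    (f : E → ℝ≥0∞) (B : Set E) : ℝ≥0∞ :=
  ⨆ t ∈ Ioo (0 : ℝ≥0∞) ⊤, t * ν (B ∩ {x | t < f x})

set_option linter.unusedSectionVars false

section Aux

variable {E : Type*} [MeasurableSpace E]

theorem SigmaMaxitive.mono {μ : Set E → ℝ≥0∞}
    (hμ : SigmaMaxitive μ) {A B : Set E} (hA : MeasurableSet A) (hB : MeasurableSet B)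
    (hAB : A ⊆ B) : μ A ≤ μ B := by
  have h := hμ.2 (fun n => if n = 0 then A else B) (by intro n; split <;> assumption)
  have hU : (⋃ n, if n = 0 then A else B) = B := by
    apply subset_antisymm
    · refine iUnion_subset fun n => ?_
      split
      · exact hAB
      · exact le_refl _
    · intro x hx
      exact mem_iUnion.2 ⟨1, by simp [hx]⟩
  rw [hU] at h
  rw [h]
  exact le_iSup_of_le 0 (by simp)

theorem SigmaMaxitive.union2 {μ : Set E → ℝ≥0∞}
    (hμ : SigmaMaxitive μ) {A B : Set E} (hA : MeasurableSet A) (hB : MeasurableSet B) :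
    μ (A ∪ B) = μ A ⊔ μ B := by
  have h := hμ.2 (fun n => if n = 0 then A else B) (by intro n; split <;> assumption)
  have hU : (⋃ n, if n = 0 then A else B) = A ∪ B := by
    apply subset_antisymm
    · refine iUnion_subset fun n => ?_
      split
      · exact subset_union_left
      · exact subset_union_right
    · rintro x (hx | hx)
      · exact mem_iUnion.2 ⟨0, by simp [hx]⟩
      · exact mem_iUnion.2 ⟨1, by simp [hx]⟩
  rw [hU] at h
  rw [h]
  apply le_antisymm
  · refine iSup_le fun n => ?_
    split
    · exact le_sup_left
    · exact le_sup_right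
  · refine sup_le (le_iSup_of_le 0 (by simp)) (le_iSup_of_le 1 (by simp))

theorem SigmaMaxitive.iUnion_ctble {μ : Set E → ℝ≥0∞}
    (hμ : SigmaMaxitive μ) {ι : Type*} [Countable ι] (f : ι → Set E)
    (hf : ∀ i, MeasurableSet (f i)) : μ (⋃ i, f i) = ⨆ i, μ (f i) := by
  cases isEmpty_or_nonempty ι with
  | inl h =>
    rw [iUnion_of_empty, iSup_of_empty, hμ.1]; rfl
  | inr h =>
    obtain ⟨g, hg⟩ := exists_surjective_nat ι
    rw [← hg.iUnion_comp f, ← hg.iSup_comp (fun i => μ (f i))]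
    exact hμ.2 (fun n => f (g n)) fun n => hf _

open Classical in
/-- The `{0,1}`-valued set function associated with a predicate. -/
noncomputable def indFn (P : Set E → Prop) : Set E → ℝ≥0∞ := fun B => if P B then 0 else 1

theorem indFn_of_pos {P : Set E → Prop} {B : Set E} (h : P B) : indFn P B = 0 := by
  simp only [indFn]
  exact if_pos h

theorem indFn_of_neg {P : Set E → Prop} {B : Set E} (h : ¬ P B) : indFn P B = 1 := by
  simp only [indFn]
  exact if_neg h

theorem indFn_le_one {P : Set E → Prop} (B : Set E) : indFn P B ≤ 1 := by
  simp only [indFn]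
  split
  · exact zero_le
  · exact le_refl _

theorem indFn_eq_zero {P : Set E → Prop} {B : Set E} (h : indFn P B = 0) : P B := by
  by_contra hc
  rw [indFn_of_neg hc] at h
  exact one_ne_zero h

open Classical in
theorem indicator_maxitive (P : Set E → Prop) (h0 : P ∅)
    (hiff : ∀ B : ℕ → Set E, (∀ n, MeasurableSet (B n)) →
      (P (⋃ n, B n) ↔ ∀ n, P (B n))) :
    SigmaMaxitive (indFn P) := by
  constructor
  · exact indFn_of_pos h0
  · intro B hB
    by_cases h : ∀ n, P (B n)
    · rw [indFn_of_pos ((hiff B hB).2 h)]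
      refine (le_antisymm (iSup_le fun n => ?_) (zero_le)).symm
      rw [indFn_of_pos (h n)]
    · push_neg at h
      obtain ⟨k, hk⟩ := h
      have hU : ¬ P (⋃ n, B n) := fun hP => hk ((hiff B hB).1 hP k)
      rw [indFn_of_neg hU]
      apply le_antisymm
      · exact le_iSup_of_le k (by rw [indFn_of_neg hk])
      · exact iSup_le fun n => indFn_le_one _

/-- `B` can be covered by countably many measurable sets of finite `τ`-measure. -/
def SigFinSet (τ : Set E → ℝ≥0∞) (B : Set E) : Prop :=
  ∃ C : ℕ → Set E, (∀ n, MeasurableSet (C n)) ∧ B ⊆ (⋃ n, C n) ∧ ∀ n, τ (C n) < ⊤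

theorem SigFinSet.mono {τ : Set E → ℝ≥0∞} {A B : Set E} (h : SigFinSet τ B) (hAB : A ⊆ B) :
    SigFinSet τ A := by
  obtain ⟨C, h1, h2, h3⟩ := h
  exact ⟨C, h1, hAB.trans h2, h3⟩

theorem SigFinSet.iUnion {τ : Set E → ℝ≥0∞} {B : ℕ → Set E} (h : ∀ n, SigFinSet τ (B n)) :
    SigFinSet τ (⋃ n, B n) := by
  choose C h1 h2 h3 using h
  refine ⟨fun k => C (Nat.unpair k).1 (Nat.unpair k).2, fun k => h1 _ _, ?_, fun k => h3 _ _⟩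
  refine iUnion_subset fun n => (h2 n).trans (iUnion_subset fun m => ?_)
  intro x hx
  exact mem_iUnion.2 ⟨Nat.pair n m, by simpa [Nat.unpair_pair] using hx⟩

theorem inv_nat_succ_mem_Ioo (n : ℕ) : ((n:ℝ≥0∞)+1)⁻¹ ∈ Ioo (0:ℝ≥0∞) ⊤ := by
  constructor
  · rw [ENNReal.inv_pos]
    exact (ENNReal.add_lt_top.2 ⟨ENNReal.natCast_lt_top n, ENNReal.one_lt_top⟩).ne
  · rw [ENNReal.inv_lt_top]
    exact lt_of_lt_of_le zero_lt_one le_add_self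

theorem rnp_fwd_sigmaFinite {E : Type*} [MeasurableSpace E] (τ : Set E → ℝ≥0∞)
    (hτ : SigmaMaxitive τ)
    (h : ∀ ν : Set E → ℝ≥0∞, SigmaMaxitive ν →
        (∀ B : Set E, MeasurableSet B → τ B < ⊤ → ν B ≤ ⊤ * τ B) →
        ∃ c : E → ℝ≥0∞, Measurable c ∧
          ∀ B : Set E, MeasurableSet B → ν B = shilkretInt τ c B) :
    ∃ B : ℕ → Set E, (∀ n, MeasurableSet (B n)) ∧ (⋃ n, B n) = univ ∧ ∀ n, τ (B n) < ⊤ := by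
  classical
  set ν : Set E → ℝ≥0∞ := indFn (SigFinSet τ) with hνdef
  have hν : SigmaMaxitive ν :=
    indicator_maxitive _ ⟨fun _ => ∅, fun _ => MeasurableSet.empty, by simp,
        by simp [hτ.1, ENNReal.zero_lt_top]⟩
      (fun B hB => ⟨fun hU n => hU.mono (subset_iUnion B n), SigFinSet.iUnion⟩)
  have hac : ∀ B, MeasurableSet B → τ B < ⊤ → ν B ≤ ⊤ * τ B := by
    intro B hB hfin
    have hsf : SigFinSet τ B :=
      ⟨fun _ => B, fun _ => hB, fun x hx => mem_iUnion.2 ⟨0, hx⟩, fun _ => hfin⟩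
    rw [hνdef, indFn_of_pos hsf]
    exact zero_le
  obtain ⟨c, hc, hrep⟩ := h ν hν hac
  have hν0 : ∀ X, ν X = 0 → SigFinSet τ X := fun X hX => indFn_eq_zero hX
  have hmeas0 : MeasurableSet {x | c x = 0} := hc (measurableSet_singleton 0)
  have h0 : SigFinSet τ {x | c x = 0} := by
    apply hν0
    rw [hrep _ hmeas0]
    refine le_antisymm (iSup₂_le fun t ht => ?_) (zero_le)
    have he : {x | c x = 0} ∩ {x | t < c x} = ∅ := by
      ext x
      simp only [mem_inter_iff, mem_setOf_eq, mem_empty_iff_false, iff_false, not_and]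
      intro h1 h2
      rw [h1] at h2
      exact (ht.1.trans h2).false
    rw [he, hτ.1, mul_zero]
  have hsf : ∀ n : ℕ, SigFinSet τ {x | ((n:ℝ≥0∞)+1)⁻¹ < c x} := by
    intro n
    set t : ℝ≥0∞ := ((n:ℝ≥0∞)+1)⁻¹ with htdef
    have ht := inv_nat_succ_mem_Ioo n
    set A := {x | t < c x} with hAdef
    have hAm : MeasurableSet A := hc measurableSet_Ioi
    have h1 : ν A ≤ 1 := indFn_le_one A
    have h2 : t * τ A ≤ ν A := by
      rw [hrep _ hAm]
      refine le_iSup₂_of_le t ht ?_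
      rw [show A ∩ {x | t < c x} = A from inter_self A]
    have hfin : τ A < ⊤ := by
      by_contra hcon
      rw [not_lt, top_le_iff] at hcon
      rw [hcon, ENNReal.mul_top ht.1.ne'] at h2
      exact absurd (h2.trans h1) (by simp)
    exact ⟨fun _ => A, fun _ => hAm, fun x hx => mem_iUnion.2 ⟨0, hx⟩, fun _ => hfin⟩
  have huniv : SigFinSet τ univ := by
    have := SigFinSet.iUnion (B := fun n => Nat.rec {x | c x = 0}
      (fun m _ => {x | ((m:ℝ≥0∞)+1)⁻¹ < c x}) n)
      (by intro n; cases n with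
        | zero => exact h0
        | succ m => exact hsf m)
    refine this.mono ?_
    intro x _
    rcases eq_or_ne (c x) 0 with hx | hx
    · exact mem_iUnion.2 ⟨0, hx⟩
    · obtain ⟨n, hn⟩ := ENNReal.exists_inv_nat_lt hx
      refine mem_iUnion.2 ⟨n + 1, ?_⟩
      show ((n:ℝ≥0∞)+1)⁻¹ < c x
      refine lt_of_le_of_lt ?_ hn
      exact ENNReal.inv_le_inv.2 (le_add_right le_rfl)
  obtain ⟨C, hCm, hCcov, hCfin⟩ := huniv
  exact ⟨C, hCm, subset_antisymm (subset_univ _) (fun x _ => hCcov (mem_univ x)), hCfin⟩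

theorem rnp_fwd_sigmaPrincipal {E : Type*} [MeasurableSpace E] (τ : Set E → ℝ≥0∞)
    (hτ : SigmaMaxitive τ)
    (h : ∀ ν : Set E → ℝ≥0∞, SigmaMaxitive ν →
        (∀ B : Set E, MeasurableSet B → τ B < ⊤ → ν B ≤ ⊤ * τ B) →
        ∃ c : E → ℝ≥0∞, Measurable c ∧
          ∀ B : Set E, MeasurableSet B → ν B = shilkretInt τ c B) :
    SigmaPrincipal τ := by
  classical
  intro I hI
  obtain ⟨A₀, hA₀⟩ := hI.1
  set J : Set E → Prop := fun B => MeasurableSet B ∧ ∃ A ∈ I, τ (B \ A) = 0 with hJdef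
  have hJmono : ∀ X Y, J Y → X ⊆ Y → MeasurableSet X → J X := by
    rintro X Y ⟨hYm, A, hA, hYA⟩ hXY hXm
    refine ⟨hXm, A, hA, le_antisymm (le_trans ?_ hYA.le) (zero_le)⟩
    exact hτ.mono (hXm.diff (hI.2.1 A hA)) (hYm.diff (hI.2.1 A hA))
      (fun x hx => ⟨hXY hx.1, hx.2⟩)
  have hJ0 : J ∅ := ⟨MeasurableSet.empty, A₀, hA₀, by rw [empty_diff]; exact hτ.1⟩
  set ν : Set E → ℝ≥0∞ := indFn J with hνdef
  have hν : SigmaMaxitive ν := by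
    refine indicator_maxitive J hJ0 ?_
    intro B hB
    constructor
    · intro hU n
      exact hJmono _ _ hU (subset_iUnion B n) (hB n)
    · intro hall
      choose A hA hBA using fun n => (hall n).2
      refine ⟨MeasurableSet.iUnion hB, ⋃ n, A n, hI.2.2.1 A hA, ?_⟩
      have hAm : ∀ n, MeasurableSet (A n) := fun n => hI.2.1 _ (hA n)
      have hsub : (⋃ n, B n) \ (⋃ n, A n) ⊆ ⋃ n, (B n \ A n) := by
        rintro x ⟨hx1, hx2⟩
        obtain ⟨n, hn⟩ := mem_iUnion.1 hx1
        exact mem_iUnion.2 ⟨n, hn, fun hc => hx2 (mem_iUnion.2 ⟨n, hc⟩)⟩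
      have h2 : τ (⋃ n, (B n \ A n)) = 0 := by
        rw [hτ.2 _ (fun n => (hB n).diff (hAm n))]
        simp [hBA]
      refine le_antisymm (le_trans ?_ h2.le) (zero_le)
      exact hτ.mono ((MeasurableSet.iUnion hB).diff (MeasurableSet.iUnion hAm))
        (MeasurableSet.iUnion fun n => (hB n).diff (hAm n)) hsub
  have hac : ∀ B, MeasurableSet B → τ B < ⊤ → ν B ≤ ⊤ * τ B := by
    intro B hB _
    rcases eq_or_ne (τ B) 0 with h0 | h0
    · have hJB : J B := ⟨hB, A₀, hA₀,
        le_antisymm (le_trans (hτ.mono (hB.diff (hI.2.1 _ hA₀)) hB diff_subset) h0.le)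
          (zero_le)⟩
      rw [hνdef, indFn_of_pos hJB]
      exact zero_le
    · rw [ENNReal.top_mul h0]; exact le_top
  obtain ⟨c, hc, hrep⟩ := h ν hν hac
  have hmeas0 : MeasurableSet {x | c x = 0} := hc (measurableSet_singleton 0)
  have hνz : ν {x | c x = 0} = 0 := by
    rw [hrep _ hmeas0]
    refine le_antisymm (iSup₂_le fun t ht => ?_) (zero_le)
    have he : {x | c x = 0} ∩ {x | t < c x} = ∅ := by
      ext x
      simp only [mem_inter_iff, mem_setOf_eq, mem_empty_iff_false, iff_false, not_and]
      intro h1 h2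
      rw [h1] at h2
      exact (ht.1.trans h2).false
    rw [he, hτ.1, mul_zero]
  have hJz : J {x | c x = 0} := indFn_eq_zero hνz
  obtain ⟨_, L, hL, hLnull⟩ := hJz
  have hLm : MeasurableSet L := hI.2.1 _ hL
  refine ⟨L, hL, fun S hS => ?_⟩
  have hSm := hI.2.1 S hS
  have hνS : shilkretInt τ c S = 0 := by
    rw [← hrep _ hSm]
    have hJS : J S := ⟨hSm, S, hS, by rw [diff_self]; exact hτ.1⟩
    exact indFn_of_pos hJS
  have hterm : ∀ n : ℕ, τ (S ∩ {x | ((n:ℝ≥0∞)+1)⁻¹ < c x}) = 0 := by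
    intro n
    have ht := inv_nat_succ_mem_Ioo n
    have h1 : ((n:ℝ≥0∞)+1)⁻¹ * τ (S ∩ {x | ((n:ℝ≥0∞)+1)⁻¹ < c x}) = 0 := by
      refine le_antisymm ?_ (zero_le)
      rw [← hνS]
      exact le_iSup₂ (f := fun t (_ : t ∈ Ioo (0:ℝ≥0∞) ⊤) => t * τ (S ∩ {x | t < c x})) _ ht
    rcases mul_eq_zero.1 h1 with h2 | h2
    · exact absurd h2 ht.1.ne'
    · exact h2
  have hXm : ∀ n : ℕ, MeasurableSet (S ∩ {x | ((n:ℝ≥0∞)+1)⁻¹ < c x}) :=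
    fun n => hSm.inter (hc measurableSet_Ioi)
  have hX : τ (⋃ n : ℕ, S ∩ {x | ((n:ℝ≥0∞)+1)⁻¹ < c x}) = 0 := by
    rw [hτ.2 _ hXm]
    simp [hterm]
  have hcover : S \ L ⊆ (⋃ n : ℕ, S ∩ {x | ((n:ℝ≥0∞)+1)⁻¹ < c x}) ∪ ({x | c x = 0} \ L) := by
    rintro x ⟨hxS, hxL⟩
    rcases eq_or_ne (c x) 0 with hx | hx
    · exact Or.inr ⟨hx, hxL⟩
    · obtain ⟨n, hn⟩ := ENNReal.exists_inv_nat_lt hx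
      refine Or.inl (mem_iUnion.2 ⟨n, hxS, ?_⟩)
      show ((n:ℝ≥0∞)+1)⁻¹ < c x
      exact lt_of_le_of_lt (ENNReal.inv_le_inv.2 (le_add_right le_rfl)) hn
  have hUm : MeasurableSet ((⋃ n : ℕ, S ∩ {x | ((n:ℝ≥0∞)+1)⁻¹ < c x}) ∪ ({x | c x = 0} \ L)) :=
    (MeasurableSet.iUnion hXm).union (hmeas0.diff hLm)
  refine le_antisymm (le_trans (hτ.mono (hSm.diff hLm) hUm hcover) ?_) (zero_le)
  rw [hτ.union2 (MeasurableSet.iUnion hXm) (hmeas0.diff hLm), hX, hLnull]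
  simp

theorem rnp_bwd {E : Type*} [MeasurableSpace E] (τ : Set E → ℝ≥0∞)
    (hτ : SigmaMaxitive τ)
    (Bfin : ℕ → Set E) (hBm : ∀ n, MeasurableSet (Bfin n)) (hBu : (⋃ n, Bfin n) = univ)
    (hBf : ∀ n, τ (Bfin n) < ⊤) (hprin : SigmaPrincipal τ)
    (ν : Set E → ℝ≥0∞) (hν : SigmaMaxitive ν)
    (hac : ∀ B : Set E, MeasurableSet B → τ B < ⊤ → ν B ≤ ⊤ * τ B) :
    ∃ c : E → ℝ≥0∞, Measurable c ∧
      ∀ B : Set E, MeasurableSet B → ν B = shilkretInt τ c B := by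
  classical
  -- upgraded absolute continuity
  have hnull : ∀ B : Set E, MeasurableSet B → τ B = 0 → ν B = 0 := by
    intro B hB h0
    have hdec : B = ⋃ n, B ∩ Bfin n := by rw [← inter_iUnion, hBu, inter_univ]
    rw [hdec, hν.2 _ (fun n => hB.inter (hBm n))]
    refine le_antisymm (iSup_le fun n => ?_) (zero_le)
    have hfin : τ (B ∩ Bfin n) < ⊤ :=
      lt_of_le_of_lt (hτ.mono (hB.inter (hBm n)) (hBm n) inter_subset_right) (hBf n)
    have h0' : τ (B ∩ Bfin n) = 0 :=
      le_antisymm (le_trans (hτ.mono (hB.inter (hBm n)) hB inter_subset_left) h0.le) (zero_le)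
    have h1 := hac _ (hB.inter (hBm n)) hfin
    rwa [h0', mul_zero] at h1
  -- positive rationals as indices
  set eQ : {q : ℚ // 0 < q} → ℝ≥0∞ := fun q => ((q.1 : ℝ).toNNReal : ℝ≥0∞) with heQ
  have heQ0 : ∀ q, 0 < eQ q := by
    intro q
    rw [heQ]
    dsimp only
    rw [ENNReal.coe_pos]
    exact Real.toNNReal_pos.2 (by exact_mod_cast q.2)
  have heQtop : ∀ q, eQ q < ⊤ := fun q => ENNReal.coe_lt_top
  -- the ideals of sets on which ν is hereditarily dominated by (eQ q) • τ
  set Idl : {q : ℚ // 0 < q} → Set (Set E) := fun q =>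
    {A | MeasurableSet A ∧
      ∀ A' : Set E, A' ⊆ A → MeasurableSet A' → ν A' ≤ eQ q * τ A'} with hIdl
  have hIdlIdeal : ∀ q, IsSigmaIdeal (Idl q) := by
    intro q
    refine ⟨⟨∅, MeasurableSet.empty, fun A' hA' _ => ?_⟩, fun A hA => hA.1, ?_, ?_⟩
    · rw [subset_empty_iff.1 hA', hν.1]
      exact zero_le
    · intro B hB
      refine ⟨MeasurableSet.iUnion fun n => (hB n).1, fun A' hA' hA'm => ?_⟩
      have hdec : A' = ⋃ n, A' ∩ B n := by
        rw [← inter_iUnion]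
        exact (inter_eq_left.2 hA').symm
      rw [hdec, hν.2 _ (fun n => hA'm.inter (hB n).1),
        hτ.2 _ (fun n => hA'm.inter (hB n).1), ENNReal.mul_iSup]
      exact iSup_mono fun n => (hB n).2 _ inter_subset_right (hA'm.inter (hB n).1)
    · intro A B hBIdl hAB hAm
      exact ⟨hAm, fun A' hA' hA'm => hBIdl.2 A' (hA'.trans hAB) hA'm⟩
  choose L hLmem hLnull using fun q => hprin (Idl q) (hIdlIdeal q)
  have hLm : ∀ q, MeasurableSet (L q) := fun q => (hLmem q).1
  have hLbound : ∀ q (A' : Set E), A' ⊆ L q → MeasurableSet A' → ν A' ≤ eQ q * τ A' :=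
    fun q => (hLmem q).2
  -- the candidate density
  set c : E → ℝ≥0∞ :=
    fun x => ⨅ q, (L q).piecewise (fun _ => eQ q) (fun _ => ⊤) x with hcdef
  have hc : Measurable c :=
    Measurable.iInf fun q => Measurable.piecewise (hLm q) measurable_const measurable_const
  have hcle : ∀ q (x : E), x ∈ L q → c x ≤ eQ q := by
    intro q x hx
    refine le_trans (iInf_le _ q) ?_
    rw [piecewise_eq_of_mem _ _ _ hx]
  have hclt : ∀ (x : E) (b : ℝ≥0∞), c x < b → ∃ q, x ∈ L q ∧ eQ q < b := by
    intro x b hb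
    rw [hcdef] at hb
    obtain ⟨q, hq⟩ := iInf_lt_iff.1 hb
    by_cases hx : x ∈ L q
    · rw [piecewise_eq_of_mem _ _ _ hx] at hq
      exact ⟨q, hx, hq⟩
    · rw [piecewise_eq_of_notMem _ _ _ hx] at hq
      exact absurd hq not_top_lt
  -- Step A : on measurable sets disjoint from `L q`, `ν` dominates `eQ q • τ`
  have stepA : ∀ q (A : Set E), MeasurableSet A → A ∩ L q = ∅ → eQ q * τ A ≤ ν A := by
    intro q A hAm hdisj
    set K : Set (Set E) := {S | MeasurableSet S ∧ eQ q * τ (S ∩ A) ≤ ν A} with hK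
    have hKideal : IsSigmaIdeal K := by
      refine ⟨⟨∅, MeasurableSet.empty, ?_⟩, fun S hS => hS.1, ?_, ?_⟩
      · rw [empty_inter, hτ.1, mul_zero]
        exact zero_le
      · intro S hS
        refine ⟨MeasurableSet.iUnion fun n => (hS n).1, ?_⟩
        rw [iUnion_inter, hτ.2 _ (fun n => (hS n).1.inter hAm), ENNReal.mul_iSup]
        exact iSup_le fun n => (hS n).2
      · intro X Y hY hXY hXm
        refine ⟨hXm, le_trans (mul_le_mul_right ?_ _) hY.2⟩
        exact hτ.mono (hXm.inter hAm) (hY.1.inter hAm) (fun x hx => ⟨hXY hx.1, hx.2⟩)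
    obtain ⟨W, hWK, hWmax⟩ := hprin K hKideal
    have hWm : MeasurableSet W := hWK.1
    have hAW : τ (A \ W) = 0 := by
      by_contra hpos
      have hAWm : MeasurableSet (A \ W) := hAm.diff hWm
      have hnotin : A \ W ∉ Idl q := by
        intro hin
        have h2 := hLnull q _ hin
        have he : (A \ W) \ L q = A \ W := by
          ext x
          constructor
          · rintro ⟨h1, _⟩
            exact h1
          · intro hx
            refine ⟨hx, fun hxL => ?_⟩
            have : x ∈ A ∩ L q := ⟨hx.1, hxL⟩
            rw [hdisj] at this
            exact this
        rw [he] at h2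
        exact hpos h2
      rw [hIdl, mem_setOf_eq] at hnotin
      push_neg at hnotin
      obtain ⟨A'', hsub, hA''m, hbad⟩ := hnotin hAWm
      have hτA'' : τ A'' ≠ 0 := by
        intro h0
        rw [hnull A'' hA''m h0, h0, mul_zero] at hbad
        exact (lt_irrefl _ hbad)
      have hA''K : A'' ∈ K := by
        refine ⟨hA''m, ?_⟩
        rw [inter_eq_left.2 (hsub.trans diff_subset)]
        exact le_trans hbad.le (hν.mono hA''m hAm (hsub.trans diff_subset))
      have h3 := hWmax _ hA''K
      have he2 : A'' \ W = A'' := by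
        ext x
        constructor
        · rintro ⟨h1, _⟩
          exact h1
        · intro hx
          exact ⟨hx, (hsub hx).2⟩
      rw [he2] at h3
      exact hτA'' h3
    have hsplit : τ A = τ (A ∩ W) := by
      conv_lhs => rw [← inter_union_diff A W]
      rw [hτ.union2 (hAm.inter hWm) (hAm.diff hWm), hAW]
      simp
    rw [hsplit, inter_comm A W]
    exact hWK.2
  -- Step B : lower bound  t * τ (B ∩ {t < c}) ≤ ν B
  have stepB : ∀ B : Set E, MeasurableSet B →
      ∀ t ∈ Ioo (0:ℝ≥0∞) ⊤, t * τ (B ∩ {x | t < c x}) ≤ ν B := by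
    intro B hB t ht
    set A := B ∩ {x | t < c x} with hA
    have hAm : MeasurableSet A := hB.inter (hc measurableSet_Ioi)
    have key : ∀ q, eQ q < t → eQ q * τ A ≤ ν B := by
      intro q hq
      have hdisj : A ∩ L q = ∅ := by
        rw [eq_empty_iff_forall_notMem]
        rintro x ⟨⟨hxB, hxt⟩, hxL⟩
        exact absurd (hq.trans hxt) (not_lt.2 (hcle q x hxL))
      exact le_trans (stepA q A hAm hdisj) (hν.mono hAm hB inter_subset_left)
    have hsup : t ≤ ⨆ p : {q : {q : ℚ // 0 < q} // eQ q < t}, eQ p.1 := by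
      refine le_of_forall_lt fun s hs => ?_
      obtain ⟨r, hr0, h1, h2⟩ := ENNReal.lt_iff_exists_rat_btwn.1 hs
      have hrpos : (0:ℚ) < r := by
        by_contra hc'
        push_neg at hc'
        rw [Real.toNNReal_of_nonpos (by exact_mod_cast hc')] at h1
        simp at h1
      exact lt_of_lt_of_le h1
        (le_iSup (fun p : {q : {q : ℚ // 0 < q} // eQ q < t} => eQ p.1) ⟨⟨r, hrpos⟩, h2⟩)
    calc t * τ A ≤ (⨆ p : {q : {q : ℚ // 0 < q} // eQ q < t}, eQ p.1) * τ A :=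
          mul_le_mul_left hsup _
      _ = ⨆ p : {q : {q : ℚ // 0 < q} // eQ q < t}, eQ p.1 * τ A := ENNReal.iSup_mul _ _
      _ ≤ ν B := iSup_le fun p => key p.1 p.2
  -- ν vanishes where the density vanishes
  have hzero : ∀ B : Set E, MeasurableSet B → ν (B ∩ {x | c x = 0}) = 0 := by
    intro B hB
    have hZm : MeasurableSet (B ∩ {x | c x = 0}) := hB.inter (hc (measurableSet_singleton 0))
    have hpiece : ∀ n : ℕ, ν (B ∩ {x | c x = 0} ∩ Bfin n) = 0 := by
      intro n
      set Z := B ∩ {x | c x = 0} ∩ Bfin n with hZ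
      have hZm' : MeasurableSet Z := hZm.inter (hBm n)
      have hbound : ∀ k : ℕ, ν Z ≤ ((k:ℝ≥0∞)+1)⁻¹ * τ (Bfin n) := by
        intro k
        have htk := inv_nat_succ_mem_Ioo k
        have hcov : Z = ⋃ p : {q : {q : ℚ // 0 < q} // eQ q < ((k:ℝ≥0∞)+1)⁻¹}, (Z ∩ L p.1) := by
          apply subset_antisymm
          · intro x hx
            have hx0 : c x = 0 := hx.1.2
            have hlt : c x < ((k:ℝ≥0∞)+1)⁻¹ := by rw [hx0]; exact htk.1
            obtain ⟨q, hqL, hqlt⟩ := hclt x _ hlt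
            exact mem_iUnion.2 ⟨⟨q, hqlt⟩, hx, hqL⟩
          · exact iUnion_subset fun p => inter_subset_left
        rw [hcov, hν.iUnion_ctble
          (fun p : {q : {q : ℚ // 0 < q} // eQ q < ((k:ℝ≥0∞)+1)⁻¹} => Z ∩ L p.1)
          (fun p => hZm'.inter (hLm p.1))]
        refine iSup_le fun p => ?_
        refine le_trans (hLbound p.1 _ inter_subset_right (hZm'.inter (hLm p.1))) ?_
        refine mul_le_mul' p.2.le ?_
        exact hτ.mono (hZm'.inter (hLm p.1)) (hBm n) (fun x hx => hx.1.2)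
      by_contra hpos
      have hTfin : τ (Bfin n) ≠ ⊤ := (hBf n).ne
      rcases eq_or_ne (τ (Bfin n)) 0 with hT0 | hT0
      · refine hpos (le_antisymm ?_ (zero_le))
        have h1 := hbound 0
        rwa [hT0, mul_zero] at h1
      · have hdivpos : 0 < ν Z / τ (Bfin n) := ENNReal.div_pos hpos hTfin
        obtain ⟨m, hm⟩ := ENNReal.exists_inv_nat_lt hdivpos.ne'
        have h1 : ((m:ℝ≥0∞))⁻¹ * τ (Bfin n) < ν Z :=
          (ENNReal.lt_div_iff_mul_lt (Or.inl hT0) (Or.inl hTfin)).1 hm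
        have h2 : ν Z ≤ ((m:ℝ≥0∞))⁻¹ * τ (Bfin n) :=
          le_trans (hbound m)
            (mul_le_mul_left (ENNReal.inv_le_inv.2 (le_add_right le_rfl)) _)
        exact absurd (lt_of_le_of_lt h2 h1) (lt_irrefl _)
    have hdec : B ∩ {x | c x = 0} = ⋃ n, (B ∩ {x | c x = 0} ∩ Bfin n) := by
      rw [← inter_iUnion, hBu, inter_univ]
    rw [hdec, hν.2 _ (fun n => hZm.inter (hBm n))]
    simp [hpiece]
  -- the part where the density is infinite
  have htopb : ∀ B : Set E, MeasurableSet B →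
      ν (B ∩ {x | c x = ⊤}) ≤ shilkretInt τ c B := by
    intro B hB
    have hTm : MeasurableSet (B ∩ {x | c x = ⊤}) := hB.inter (hc (measurableSet_singleton ⊤))
    rcases eq_or_ne (τ (B ∩ {x | c x = ⊤})) 0 with h0 | h0
    · rw [hnull _ hTm h0]
      exact zero_le
    · have hterm : ∀ n : ℕ, ((n:ℝ≥0∞)+1) * τ (B ∩ {x | c x = ⊤}) ≤ shilkretInt τ c B := by
        intro n
        have htIoo : ((n:ℝ≥0∞)+1) ∈ Ioo (0:ℝ≥0∞) ⊤ :=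
          ⟨lt_of_lt_of_le zero_lt_one le_add_self,
            ENNReal.add_lt_top.2 ⟨ENNReal.natCast_lt_top n, ENNReal.one_lt_top⟩⟩
        refine le_trans ?_
          (le_iSup₂ (f := fun t (_ : t ∈ Ioo (0:ℝ≥0∞) ⊤) => t * τ (B ∩ {x | t < c x})) _ htIoo)
        refine mul_le_mul_right (hτ.mono hTm (hB.inter (hc measurableSet_Ioi)) ?_) _
        rintro x ⟨hxB, hxT⟩
        refine ⟨hxB, ?_⟩
        show ((n:ℝ≥0∞)+1) < c x
        rw [hxT]
        exact htIoo.2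
      have hsup1 : (⨆ n : ℕ, ((n:ℝ≥0∞)+1)) = ⊤ := by
        refine top_unique ?_
        calc (⊤:ℝ≥0∞) = ⨆ n : ℕ, (n:ℝ≥0∞) := ENNReal.iSup_natCast.symm
          _ ≤ ⨆ n : ℕ, ((n:ℝ≥0∞)+1) := iSup_mono fun n => le_add_right le_rfl
      have h2 : (⨆ n : ℕ, ((n:ℝ≥0∞)+1) * τ (B ∩ {x | c x = ⊤})) = ⊤ := by
        rw [← ENNReal.iSup_mul, hsup1, ENNReal.top_mul h0]
      have h3 : (⊤:ℝ≥0∞) ≤ shilkretInt τ c B := h2 ▸ iSup_le hterm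
      exact le_trans le_top h3
  -- upper bound:  ν B ≤ shilkret integral of c
  have hub : ∀ B : Set E, MeasurableSet B → ν B ≤ shilkretInt τ c B := by
    intro B hB
    have main : ∀ r : ℝ≥0∞, 1 < r → r ≠ ⊤ → ν B ≤ r * shilkretInt τ c B := by
      intro r hr1 hrt
      have hr0 : r ≠ 0 := (lt_of_lt_of_le zero_lt_one hr1.le).ne'
      set f : Option (Option {p : {q : ℚ // 0 < q} × {q : ℚ // 0 < q} //
          eQ p.2 ≤ r * eQ p.1}) → Set E := fun o =>
        Option.rec (B ∩ {x | c x = 0})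
          (fun o' => Option.rec (B ∩ {x | c x = ⊤})
            (fun p => B ∩ {x | eQ p.1.1 < c x} ∩ L p.1.2) o') o with hf
      have hfm : ∀ o, MeasurableSet (f o) := by
        rintro (_ | _ | p)
        · exact hB.inter (hc (measurableSet_singleton 0))
        · exact hB.inter (hc (measurableSet_singleton ⊤))
        · exact (hB.inter (hc measurableSet_Ioi)).inter (hLm p.1.2)
      have hcov : B = ⋃ o, f o := by
        apply subset_antisymm
        · intro x hx
          rcases eq_or_ne (c x) 0 with h0 | h0
          · exact mem_iUnion.2 ⟨none, hx, h0⟩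
          rcases eq_or_ne (c x) ⊤ with hT | hT
          · exact mem_iUnion.2 ⟨some none, hx, hT⟩
          have hcx : c x < r * c x := by
            have h4 := ENNReal.mul_lt_mul_right h0 hT hr1
            rwa [mul_one, mul_comm] at h4
          obtain ⟨q, hqL, hqlt⟩ := hclt x _ hcx
          have hdiv : eQ q / r < c x :=
            (ENNReal.div_lt_iff (Or.inl hr0) (Or.inl hrt)).2 (by rwa [mul_comm] at hqlt)
          obtain ⟨s', hs'0, hs1, hs2⟩ := ENNReal.lt_iff_exists_rat_btwn.1 hdiv
          have hs'pos : (0:ℚ) < s' := by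
            by_contra hc'
            push_neg at hc'
            rw [Real.toNNReal_of_nonpos (by exact_mod_cast hc')] at hs1
            exact absurd hs1 (by simp [ENNReal.div_pos (heQ0 q).ne' hrt])
          have hpair : eQ q ≤ r * eQ ⟨s', hs'pos⟩ := by
            have h4 : eQ q / r < eQ ⟨s', hs'pos⟩ := hs1
            have h5 := (ENNReal.div_lt_iff (Or.inl hr0) (Or.inl hrt)).1 h4
            rw [mul_comm] at h5
            exact h5.le
          exact mem_iUnion.2 ⟨some (some ⟨(⟨s', hs'pos⟩, q), hpair⟩), ⟨hx, hs2⟩, hqL⟩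
        · refine iUnion_subset ?_
          rintro (_ | _ | p)
          · exact inter_subset_left
          · exact inter_subset_left
          · exact fun x hx => hx.1.1
      have hrw : ν B = ⨆ o, ν (f o) := by
        conv_lhs => rw [hcov]
        exact hν.iUnion_ctble f hfm
      rw [hrw]
      refine iSup_le ?_
      rintro (_ | _ | p)
      · rw [show f none = B ∩ {x | c x = 0} from rfl, hzero B hB]
        exact zero_le
      · refine le_trans (htopb B hB) ?_
        exact le_mul_of_one_le_left (zero_le) hr1.le
      · show ν (B ∩ {x | eQ p.1.1 < c x} ∩ L p.1.2) ≤ r * shilkretInt τ c B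
        have hmAs : MeasurableSet (B ∩ {x | eQ p.1.1 < c x}) := hB.inter (hc measurableSet_Ioi)
        refine le_trans (hLbound p.1.2 _ inter_subset_right (hmAs.inter (hLm p.1.2))) ?_
        have h1 : τ (B ∩ {x | eQ p.1.1 < c x} ∩ L p.1.2) ≤ τ (B ∩ {x | eQ p.1.1 < c x}) :=
          hτ.mono (hmAs.inter (hLm p.1.2)) hmAs inter_subset_left
        refine le_trans (mul_le_mul_right h1 _) ?_
        refine le_trans (mul_le_mul_left p.2 _) ?_
        rw [mul_assoc]
        refine mul_le_mul_right ?_ r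
        exact le_iSup₂_of_le (eQ p.1.1) ⟨heQ0 p.1.1, heQtop p.1.1⟩ le_rfl
    refine ENNReal.le_of_forall_lt_one_mul_le fun a ha => ?_
    rcases eq_or_ne a 0 with rfl | ha0
    · simp
    have hainv1 : 1 < a⁻¹ := by
      have h4 := ENNReal.inv_lt_inv.2 ha
      rwa [inv_one] at h4
    have hainvtop : a⁻¹ ≠ ⊤ := by
      rw [Ne, ENNReal.inv_eq_top]
      exact ha0
    have h1 := main a⁻¹ hainv1 hainvtop
    calc a * ν B ≤ a * (a⁻¹ * shilkretInt τ c B) := mul_le_mul_right h1 a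
      _ = (a * a⁻¹) * shilkretInt τ c B := (mul_assoc _ _ _).symm
      _ = 1 * shilkretInt τ c B := by
          rw [ENNReal.mul_inv_cancel ha0 (ha.trans ENNReal.one_lt_top).ne]
      _ = shilkretInt τ c B := one_mul _
  refine ⟨c, hc, fun B hB => le_antisymm (hub B hB) ?_⟩
  exact iSup₂_le fun t ht => stepB B hB t ht

end Aux

/-- A σ-maxitive measure has the Radon–Nikodym property w.r.t. the Shilkret
integral iff it is σ-finite and σ-principal. -/
theorem shilkret_rnp_iff_sigmaFinite_and_sigmaPrincipal
    {E : Type*} [MeasurableSpace E] (τ : Set E → ℝ≥0∞) (hτ : SigmaMaxitive τ) :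
    (∀ ν : Set E → ℝ≥0∞, SigmaMaxitive ν →
        (∀ B : Set E, MeasurableSet B → τ B < ⊤ → ν B ≤ ⊤ * τ B) →
        ∃ c : E → ℝ≥0∞, Measurable c ∧
          ∀ B : Set E, MeasurableSet B → ν B = shilkretInt τ c B) ↔
      ((∃ B : ℕ → Set E, (∀ n, MeasurableSet (B n)) ∧ (⋃ n, B n) = univ ∧
          ∀ n, τ (B n) < ⊤) ∧ SigmaPrincipal τ) := by
  constructor
  · intro h
    exact ⟨rnp_fwd_sigmaFinite τ hτ h, rnp_fwd_sigmaPrincipal τ hτ h⟩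
  · rintro ⟨⟨Bfin, hBm, hBu, hBf⟩, hprin⟩ ν hν hac
    exact rnp_bwd τ hτ Bfin hBm hBu hBf hprin ν hν hac
end

section
/- Let τ be a σ-maxitive measure on a measurable space (E, 𝔅). Then τ satisfies the Radon–Nikodym property with respect to the Sugeno integral if and only if τ is σ-principal. -/
open scoped ENNReal
open Set

/-- The Sugeno integral `⨆_{t ∈ (0,∞)} min(t, ν(B ∩ {f > t}))`. -/
noncomputable def sugenoInt {E : Type*} [MeasurableSpace E] (ν : Set E → ℝ≥0∞)
    (f : E → ℝ≥0∞) (B : Set E) : ℝ≥0∞ :=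
  ⨆ t ∈ Ioo (0 : ℝ≥0∞) ⊤, min t (ν (B ∩ {x | t < f x}))

/-- A σ-maxitive measure turns binary unions of measurable sets into max. -/
lemma sigmaMaxitive_pair {E : Type*} [MeasurableSpace E] {μ : Set E → ℝ≥0∞}
    (hμ : SigmaMaxitive μ) {A B : Set E} (hA : MeasurableSet A) (hB : MeasurableSet B) :
    μ (A ∪ B) = max (μ A) (μ B) := by
  have hmeas : ∀ n : ℕ, MeasurableSet (if n = 0 then A else B) := by
    intro n; split <;> assumption
  have hU : (⋃ n : ℕ, if n = 0 then A else B) = A ∪ B := by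
    apply subset_antisymm
    · exact iUnion_subset fun n => by
        split
        · exact subset_union_left
        · exact subset_union_right
    · apply union_subset
      · simpa using subset_iUnion (fun n : ℕ => if n = 0 then A else B) 0
      · simpa using subset_iUnion (fun n : ℕ => if n = 0 then A else B) 1
  have h := hμ.2 _ hmeas
  rw [hU] at h
  rw [h]
  apply le_antisymm
  · refine iSup_le fun n => ?_
    split
    · exact le_max_left _ _
    · exact le_max_right _ _
  · apply max_le
    · simpa using le_iSup (fun n : ℕ => μ (if n = 0 then A else B)) 0
    · simpa using le_iSup (fun n : ℕ => μ (if n = 0 then A else B)) 1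

/-- A σ-maxitive measure is monotone on measurable sets. -/
lemma sigmaMaxitive_mono {E : Type*} [MeasurableSpace E] {μ : Set E → ℝ≥0∞}
    (hμ : SigmaMaxitive μ) {A B : Set E} (hA : MeasurableSet A) (hB : MeasurableSet B)
    (hAB : A ⊆ B) : μ A ≤ μ B := by
  have h := sigmaMaxitive_pair hμ hA hB
  rw [union_eq_right.mpr hAB] at h
  rw [h]
  exact le_max_left _ _

/-- A σ-maxitive measure has the Radon–Nikodym property w.r.t. the Sugeno
integral iff it is σ-principal. -/
theorem sugeno_rnp_iff_sigmaPrincipal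
    {E : Type*} [MeasurableSpace E] (τ : Set E → ℝ≥0∞) (hτ : SigmaMaxitive τ) :
    (∀ ν : Set E → ℝ≥0∞, SigmaMaxitive ν →
        (∀ B : Set E, MeasurableSet B → ν B ≤ τ B) →
        ∃ c : E → ℝ≥0∞, Measurable c ∧
          ∀ B : Set E, MeasurableSet B → ν B = sugenoInt τ c B) ↔
      SigmaPrincipal τ := by
  classical
  constructor
  · -- RNP ⇒ σ-principal
    intro hRNP I hI
    obtain ⟨hne, hmeasI, hUI, hsubI⟩ := hI
    obtain ⟨S₀, hS₀⟩ := hne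
    have hempty : (∅ : Set E) ∈ I := hsubI ∅ S₀ hS₀ (empty_subset _) MeasurableSet.empty
    set ν : Set E → ℝ≥0∞ := fun B => ⨅ S ∈ I, τ (B \ S) with hν_def
    have hν_le : ∀ B : Set E, ν B ≤ τ B := by
      intro B
      have h := iInf₂_le (f := fun (S : Set E) (_ : S ∈ I) => τ (B \ S)) ∅ hempty
      simpa using h
    have hν0 : ν ∅ = 0 := le_antisymm (by simpa [hτ.1] using hν_le ∅) zero_le
    -- σ-maxitivity of ν
    have hνmax : SigmaMaxitive ν := by
      refine ⟨hν0, fun B hB => ?_⟩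
      apply le_antisymm
      · apply ENNReal.le_of_forall_pos_le_add
        intro ε hε hlt
        have hchoice : ∀ n, ∃ S ∈ I, τ (B n \ S) < (⨆ m, ν (B m)) + ε := by
          intro n
          have h1 : ν (B n) < (⨆ m, ν (B m)) + ε :=
            lt_of_le_of_lt (le_iSup (fun m => ν (B m)) n)
              (ENNReal.lt_add_right hlt.ne (by exact_mod_cast hε.ne'))
          obtain ⟨S, hS⟩ := iInf_lt_iff.mp h1
          obtain ⟨hSI, hSlt⟩ := iInf_lt_iff.mp hS
          exact ⟨S, hSI, hSlt⟩
        choose S hSI hSlt using hchoice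
        have hSU : (⋃ n, S n) ∈ I := hUI S hSI
        have hSUm : MeasurableSet (⋃ n, S n) := hmeasI _ hSU
        calc ν (⋃ n, B n) ≤ τ ((⋃ n, B n) \ ⋃ n, S n) :=
              iInf₂_le (f := fun (S : Set E) (_ : S ∈ I) => τ ((⋃ n, B n) \ S)) _ hSU
          _ = τ (⋃ n, (B n \ ⋃ m, S m)) := by rw [iUnion_diff]
          _ = ⨆ n, τ (B n \ ⋃ m, S m) := hτ.2 _ (fun n => (hB n).diff hSUm)
          _ ≤ ⨆ n, τ (B n \ S n) := by
              refine iSup_mono fun n => sigmaMaxitive_mono hτ ((hB n).diff hSUm)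
                ((hB n).diff (hmeasI _ (hSI n)))
                (diff_subset_diff_right (subset_iUnion S n))
          _ ≤ (⨆ m, ν (B m)) + ε := iSup_le fun n => (hSlt n).le
      · refine iSup_le fun n => le_iInf₂ fun S hS => ?_
        refine le_trans (iInf₂_le (f := fun (S : Set E) (_ : S ∈ I) => τ (B n \ S)) S hS) ?_
        exact sigmaMaxitive_mono hτ ((hB n).diff (hmeasI S hS))
          ((MeasurableSet.iUnion hB).diff (hmeasI S hS))
          (diff_subset_diff_left (subset_iUnion B n))
    obtain ⟨c, hc_meas, hc⟩ := hRNP ν hνmax (fun B _ => hν_le B)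
    have hcut_meas : ∀ t : ℝ≥0∞, MeasurableSet {x | t < c x} :=
      fun t => measurableSet_lt measurable_const hc_meas
    -- On ideal members, c vanishes τ-a.e.
    have hzero : ∀ S ∈ I, ∀ t : ℝ≥0∞, t ∈ Ioo (0 : ℝ≥0∞) ⊤ →
        τ (S ∩ {x | t < c x}) = 0 := by
      intro S hS t ht
      have hνS : ν S = 0 := by
        refine le_antisymm ?_ zero_le
        have h := iInf₂_le (f := fun (T : Set E) (_ : T ∈ I) => τ (S \ T)) S hS
        simpa [diff_self, hτ.1] using h
      have h := hc S (hmeasI S hS)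
      rw [hνS] at h
      have hterm : min t (τ (S ∩ {x | t < c x})) ≤ 0 := by
        rw [h]
        exact le_iSup₂ (f := fun (t : ℝ≥0∞) (_ : t ∈ Ioo (0:ℝ≥0∞) ⊤) =>
          min t (τ (S ∩ {x | t < c x}))) t ht
      by_contra hne
      have hpos : 0 < τ (S ∩ {x | t < c x}) := pos_iff_ne_zero.mpr hne
      exact absurd hterm (not_le.mpr (lt_min ht.1 hpos))
    have hzero0 : ∀ S ∈ I, τ (S ∩ {x | 0 < c x}) = 0 := by
      intro S hS
      have hU : S ∩ {x | 0 < c x} = ⋃ n : ℕ, S ∩ {x | ((n : ℝ≥0∞) + 1)⁻¹ < c x} := by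
        ext x
        simp only [mem_inter_iff, mem_iUnion, mem_setOf_eq]
        constructor
        · rintro ⟨hxS, hx⟩
          obtain ⟨n, hn⟩ := ENNReal.exists_inv_nat_lt hx.ne'
          refine ⟨n, hxS, lt_of_le_of_lt ?_ hn⟩
          exact ENNReal.inv_le_inv' (le_add_of_nonneg_right zero_le)
        · rintro ⟨n, hxS, hn⟩
          exact ⟨hxS, lt_of_le_of_lt zero_le hn⟩
      rw [hU, hτ.2 _ (fun n => (hmeasI S hS).inter (hcut_meas _))]
      have hz : ∀ n : ℕ, τ (S ∩ {x | ((n : ℝ≥0∞) + 1)⁻¹ < c x}) = 0 := by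
        intro n
        refine hzero S hS _ ⟨ENNReal.inv_pos.mpr ?_, ?_⟩
        · exact (ENNReal.add_lt_top.mpr ⟨ENNReal.natCast_lt_top n, ENNReal.one_lt_top⟩).ne
        · exact ENNReal.inv_lt_top.mpr (zero_lt_one.trans_le le_add_self)
      simp [hz]
    -- choose covers at small levels
    have hcov : ∀ k : ℕ, ∃ S ∈ I, τ ({x | c x ≤ ((k : ℝ≥0∞) + 1)⁻¹} \ S) < (k : ℝ≥0∞)⁻¹ := by
      intro k
      set t : ℝ≥0∞ := ((k : ℝ≥0∞) + 1)⁻¹ with ht_def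
      have hBmeas : MeasurableSet {x | c x ≤ t} := measurableSet_le hc_meas measurable_const
      have hνB : ν {x | c x ≤ t} ≤ t := by
        rw [hc _ hBmeas]
        refine iSup₂_le fun s hs => ?_
        rcases le_or_gt s t with h | h
        · exact (min_le_left _ _).trans h
        · have hE : {x | c x ≤ t} ∩ {x | s < c x} = ∅ := by
            ext x
            simp only [mem_inter_iff, mem_setOf_eq, mem_empty_iff_false, iff_false, not_and]
            intro h1 h2
            exact absurd (h2.trans_le h1) (not_lt.mpr h.le)
          rw [hE, hτ.1]
          simpa using (show (0:ℝ≥0∞) ≤ t from zero_le)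
      have htk : t < (k : ℝ≥0∞)⁻¹ := by
        rw [ht_def]
        exact ENNReal.inv_lt_inv.mpr (ENNReal.lt_add_right (ENNReal.natCast_ne_top k) one_ne_zero)
      have hlt : ν {x | c x ≤ t} < (k : ℝ≥0∞)⁻¹ := lt_of_le_of_lt hνB htk
      obtain ⟨S, hS⟩ := iInf_lt_iff.mp hlt
      obtain ⟨hSI, hSlt⟩ := iInf_lt_iff.mp hS
      exact ⟨S, hSI, hSlt⟩
    choose S hSI hSlt using hcov
    refine ⟨⋃ k, S k, hUI S hSI, ?_⟩
    intro T hT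
    have hLmeas : MeasurableSet (⋃ k, S k) := MeasurableSet.iUnion fun k => hmeasI _ (hSI k)
    have hZmeas : MeasurableSet {x | c x ≤ 0} := measurableSet_le hc_meas measurable_const
    have hZ : τ ({x | c x ≤ 0} \ ⋃ k, S k) = 0 := by
      by_contra hne
      obtain ⟨n, hn⟩ := ENNReal.exists_inv_nat_lt hne
      have hsub : {x | c x ≤ 0} \ ⋃ k, S k ⊆ {x | c x ≤ ((n : ℝ≥0∞) + 1)⁻¹} \ S n := by
        rintro x ⟨hx1, hx2⟩
        refine ⟨?_, fun h => hx2 (subset_iUnion S n h)⟩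
        show c x ≤ ((n : ℝ≥0∞) + 1)⁻¹
        exact le_trans hx1 zero_le
      have hle' := (sigmaMaxitive_mono hτ (hZmeas.diff hLmeas)
        ((measurableSet_le hc_meas measurable_const).diff (hmeasI _ (hSI n))) hsub).trans_lt
        (hSlt n)
      exact absurd hle' (not_lt.mpr hn.le)
    have hsub2 : T \ ⋃ k, S k ⊆ (T ∩ {x | 0 < c x}) ∪ ({x | c x ≤ 0} \ ⋃ k, S k) := by
      rintro x ⟨hxT, hxL⟩
      rcases eq_zero_or_pos (c x) with h | h
      · exact Or.inr ⟨h.le, hxL⟩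
      · exact Or.inl ⟨hxT, h⟩
    have hTmeas := hmeasI T hT
    refine le_antisymm ?_ zero_le
    calc τ (T \ ⋃ k, S k) ≤ τ ((T ∩ {x | 0 < c x}) ∪ ({x | c x ≤ 0} \ ⋃ k, S k)) :=
          sigmaMaxitive_mono hτ (hTmeas.diff hLmeas)
            ((hTmeas.inter (hcut_meas 0)).union (hZmeas.diff hLmeas)) hsub2
      _ = max (τ (T ∩ {x | 0 < c x})) (τ ({x | c x ≤ 0} \ ⋃ k, S k)) :=
          sigmaMaxitive_pair hτ (hTmeas.inter (hcut_meas 0)) (hZmeas.diff hLmeas)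
      _ = 0 := by rw [hzero0 T hT, hZ]; simp
  · -- σ-principal ⇒ RNP
    intro hp ν hν hle
    have hIq : ∀ q : ℚ, IsSigmaIdeal {B : Set E | MeasurableSet B ∧
        ν B ≤ ((Real.toNNReal (q : ℝ) : ℝ≥0∞))} := by
      intro q
      refine ⟨⟨∅, MeasurableSet.empty, by simp [hν.1]⟩, fun A hA => hA.1, ?_, ?_⟩
      · intro B hB
        refine ⟨MeasurableSet.iUnion fun n => (hB n).1, ?_⟩
        rw [hν.2 _ (fun n => (hB n).1)]
        exact iSup_le fun n => (hB n).2
      · intro A B hB hAB hA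
        exact ⟨hA, (sigmaMaxitive_mono hν hA hB.1 hAB).trans hB.2⟩
    choose L hLmem hLnull using fun q : ℚ => hp _ (hIq q)
    set c : E → ℝ≥0∞ := fun x => ⨅ q : ℚ,
      (if x ∈ L q then ((Real.toNNReal (q : ℝ) : ℝ≥0∞)) else ⊤) with hc_def
    have hLq_meas : ∀ q : ℚ, MeasurableSet (L q) := fun q => (hLmem q).1
    have hc_meas : Measurable c := by
      rw [hc_def]
      refine Measurable.iInf fun q => Measurable.ite ?_ measurable_const measurable_const
      simpa using hLq_meas q
    have hc_le : ∀ (q : ℚ) (x : E), x ∈ L q →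
        c x ≤ ((Real.toNNReal (q : ℝ) : ℝ≥0∞)) := by
      intro q x hx
      have h := iInf_le (fun q' : ℚ =>
        (if x ∈ L q' then ((Real.toNNReal (q' : ℝ) : ℝ≥0∞)) else ⊤)) q
      rw [if_pos hx] at h
      exact h
    refine ⟨c, hc_meas, fun B hB => ?_⟩
    have hcut_meas : ∀ t : ℝ≥0∞, MeasurableSet {x | t < c x} :=
      fun t => measurableSet_lt measurable_const hc_meas
    apply le_antisymm
    · -- ν B ≤ sugenoInt τ c B
      by_contra hcon
      push_neg at hcon
      obtain ⟨q, hq0, hq1, hq2⟩ := ENNReal.lt_iff_exists_rat_btwn.mp hcon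
      obtain ⟨q', hq'0, hq'1, hq'2⟩ := ENNReal.lt_iff_exists_rat_btwn.mp hq2
      set t : ℝ≥0∞ := ((Real.toNNReal (q : ℝ) : ℝ≥0∞)) with ht_def
      set t' : ℝ≥0∞ := ((Real.toNNReal (q' : ℝ) : ℝ≥0∞)) with ht'_def
      have ht : t ∈ Ioo (0 : ℝ≥0∞) ⊤ := ⟨lt_of_le_of_lt zero_le hq1, ENNReal.coe_lt_top⟩
      have hterm : min t (τ (B ∩ {x | t < c x})) ≤ sugenoInt τ c B :=
        le_iSup₂ (f := fun (s : ℝ≥0∞) (_ : s ∈ Ioo (0:ℝ≥0∞) ⊤) =>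
          min s (τ (B ∩ {x | s < c x}))) t ht
      have hτs : τ (B ∩ {x | t < c x}) ≤ sugenoInt τ c B := by
        by_contra hcon2
        push_neg at hcon2
        exact absurd hterm (not_le.mpr (lt_min hq1 hcon2))
      have hν1 : ν (B ∩ {x | t < c x}) ≤ sugenoInt τ c B :=
        (hle _ (hB.inter (hcut_meas t))).trans hτs
      -- a countable cover of {c ≤ t} by ideal elements of small ν
      let e : ℕ ≃ ℚ := (Denumerable.eqv ℚ).symm
      set D : ℕ → Set E := fun n =>
        if ((Real.toNNReal ((e n : ℚ) : ℝ) : ℝ≥0∞)) < t' then L (e n) else ∅ with hD_def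
      have hD_meas : ∀ n, MeasurableSet (D n) := by
        intro n
        rw [hD_def]
        beta_reduce
        split
        · exact hLq_meas _
        · exact MeasurableSet.empty
      have hνD : ∀ n, ν (D n) ≤ t' := by
        intro n
        rw [hD_def]
        beta_reduce
        split
        · next h => exact (hLmem (e n)).2.trans h.le
        · simp [hν.1]
      have hcover : B ⊆ (B ∩ {x | t < c x}) ∪ ⋃ n, D n := by
        intro x hx
        rcases lt_or_ge t (c x) with h | h
        · exact Or.inl ⟨hx, h⟩
        · right
          have hlt : c x < t' := lt_of_le_of_lt h hq'1
          rw [hc_def] at hlt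
          simp only at hlt
          obtain ⟨q₀, hq₀⟩ := iInf_lt_iff.mp hlt
          by_cases hxL : x ∈ L q₀
          · rw [if_pos hxL] at hq₀
            refine mem_iUnion.mpr ⟨e.symm q₀, ?_⟩
            rw [hD_def]
            simp only [Equiv.apply_symm_apply]
            rw [if_pos hq₀]
            exact hxL
          · rw [if_neg hxL] at hq₀
            exact absurd hq₀ not_top_lt
      have hUD_meas : MeasurableSet (⋃ n, D n) := MeasurableSet.iUnion hD_meas
      have hνB_le : ν B ≤ max (ν (B ∩ {x | t < c x})) (ν (⋃ n, D n)) := by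
        rw [← sigmaMaxitive_pair hν (hB.inter (hcut_meas t)) hUD_meas]
        exact sigmaMaxitive_mono hν hB ((hB.inter (hcut_meas t)).union hUD_meas) hcover
      have hνU : ν (⋃ n, D n) ≤ t' := by
        rw [hν.2 D hD_meas]
        exact iSup_le hνD
      have hfinal : ν B ≤ max (sugenoInt τ c B) t' :=
        hνB_le.trans (max_le_max hν1 hνU)
      exact absurd hfinal (not_le.mpr (max_lt hcon hq'2))
    · -- sugenoInt τ c B ≤ ν B
      refine iSup₂_le fun t ht => ?_
      rcases le_or_gt t (ν B) with h | h
      · exact (min_le_left _ _).trans h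
      · obtain ⟨q, hq0, hq1, hq2⟩ := ENNReal.lt_iff_exists_rat_btwn.mp h
        have hBI : B ∈ {B : Set E | MeasurableSet B ∧
            ν B ≤ ((Real.toNNReal (q : ℝ) : ℝ≥0∞))} := ⟨hB, hq1.le⟩
        have h0 : τ (B \ L q) = 0 := hLnull q B hBI
        have hsub : B ∩ {x | t < c x} ⊆ B \ L q := by
          rintro x ⟨hxB, hxc⟩
          refine ⟨hxB, fun hxL => ?_⟩
          exact absurd hxc (not_lt.mpr ((hc_le q x hxL).trans hq2.le))
        have hz : τ (B ∩ {x | t < c x}) = 0 := by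
          refine le_antisymm ?_ zero_le
          refine le_trans (sigmaMaxitive_mono hτ (hB.inter (hcut_meas t))
            (hB.diff (hLq_meas q)) hsub) h0.le
        rw [hz]
        simpa using (show (0:ℝ≥0∞) ≤ ν B from zero_le)
end

section
/- Let ⊙ be a non-degenerate pseudo-multiplication on [0,∞]. For an element t ∈ [0,∞], the following conditions are equivalent: (i) t is ⊙-finite; (ii) s ⊙ t is ⊙-finite for some s > 0; (iii) s ⊙ t ≤ 1⊙ for some s > 0; (iv) t ⊙ s' ≤ 1⊙ for some s' > 0; (v) t ⊙ s' is ⊙-finite for some s' > 0. -/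
open scoped ENNReal
open Set

namespace PseudoMul

variable (P : PseudoMul)

lemma one_pos : 0 < P.one := by
  rcases eq_or_ne P.one 0 with h | h
  · have h1 := P.one_op 1
    rw [h, P.zero_op] at h1
    exact absurd h1.symm one_ne_zero
  · exact pos_iff_ne_zero.mpr h

lemma op_pos {s t : ℝ≥0∞} (hs : 0 < s) (ht : 0 < t) : 0 < P.op s t := by
  refine pos_iff_ne_zero.mpr fun h0 => ?_
  rcases P.no_zero_divisors s t h0 with h | h
  · exact hs.ne' h
  · exact ht.ne' h

/-- From `⊙`-finiteness, extract a small left multiple. -/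
lemma exists_op_lt {t a : ℝ≥0∞} (h : P.OFinite t) (ha : 0 < a) :
    ∃ s ∈ Ioi (0 : ℝ≥0∞), P.op s t < a := by
  by_contra hc
  push_neg at hc
  have : a ≤ ⨅ s ∈ Ioi (0 : ℝ≥0∞), P.op s t := le_iInf₂ hc
  rw [h] at this
  exact ha.ne' (le_antisymm this zero_le)

lemma ofinite_of_le_one (hP : P.Nondegenerate) {a : ℝ≥0∞} (ha : a ≤ P.one) :
    P.OFinite a := by
  have h1 : (⨅ s ∈ Ioi (0:ℝ≥0∞), P.op s a) ≤ ⨅ s ∈ Ioi (0:ℝ≥0∞), P.op s P.one :=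
    iInf₂_mono fun s _ => P.mono_right s ha
  have h2 : (⨅ s ∈ Ioi (0:ℝ≥0∞), P.op s P.one) = 0 := hP
  exact le_antisymm (h1.trans h2.le) zero_le

/-- (2) → (1). -/
lemma ofinite_of_op_left {s t : ℝ≥0∞} (hs : 0 < s) (h : P.OFinite (P.op s t)) :
    P.OFinite t := by
  refine le_antisymm ?_ zero_le
  have h' : (⨅ r ∈ Ioi (0:ℝ≥0∞), P.op r (P.op s t)) = 0 := h
  refine le_trans (le_iInf₂ fun r hr => ?_) h'.le
  calc (⨅ u ∈ Ioi (0:ℝ≥0∞), P.op u t) ≤ P.op (P.op r s) t :=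
        iInf₂_le _ (P.op_pos hr hs)
    _ = P.op r (P.op s t) := P.assoc r s t

/-- (4) → (1). -/
lemma ofinite_of_op_right (hP : P.Nondegenerate) {t s' : ℝ≥0∞} (hs' : 0 < s')
    (h : P.op t s' ≤ P.one) : P.OFinite t := by
  by_contra hc
  have hcpos : 0 < ⨅ s ∈ Ioi (0:ℝ≥0∞), P.op s t := pos_iff_ne_zero.mpr hc
  have key : P.op (⨅ s ∈ Ioi (0:ℝ≥0∞), P.op s t) s' ≤ ⨅ r ∈ Ioi (0:ℝ≥0∞), P.op r P.one := by
    refine le_iInf₂ fun r hr => ?_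
    calc P.op (⨅ s ∈ Ioi (0:ℝ≥0∞), P.op s t) s' ≤ P.op (P.op r t) s' :=
          P.mono_left s' (iInf₂_le r hr)
      _ = P.op r (P.op t s') := P.assoc r t s'
      _ ≤ P.op r P.one := P.mono_right r h
  have h2 : (⨅ r ∈ Ioi (0:ℝ≥0∞), P.op r P.one) = 0 := hP
  rw [h2] at key
  have h0 := le_antisymm key zero_le
  rcases P.no_zero_divisors _ _ h0 with h0 | h0
  · exact hcpos.ne' h0
  · exact hs'.ne' h0

/-- For `a ∈ (0,∞)`, `a ⊙ r` can be made arbitrarily small by continuity. -/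
lemma exists_op_right_lt {a ε : ℝ≥0∞} (ha0 : 0 < a) (hatop : a < ⊤) (hε : 0 < ε) :
    ∃ r ∈ Ioi (0:ℝ≥0∞), P.op a r < ε := by
  have hmem : ∀ r : ℝ≥0∞, (a, r) ∈ (Ioo 0 ⊤ ×ˢ univ : Set (ℝ≥0∞ × ℝ≥0∞)) :=
    fun r => ⟨⟨ha0, hatop⟩, mem_univ r⟩
  have hcont : Continuous fun r : ℝ≥0∞ => P.op a r := by
    rw [← continuousOn_univ]
    have : ContinuousOn (fun r : ℝ≥0∞ => (a, r)) univ :=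
      (continuous_const.prodMk continuous_id).continuousOn
    exact P.continuousOn.comp this fun r _ => hmem r
  have h0 : Filter.Tendsto (fun r : ℝ≥0∞ => P.op a r) (nhds 0) (nhds 0) := by
    have := hcont.tendsto 0
    rwa [P.op_zero] at this
  have h1 : ∀ᶠ r in nhdsWithin (0:ℝ≥0∞) (Ioi 0), P.op a r < ε :=
    (h0.eventually_lt_const hε).filter_mono nhdsWithin_le_nhds
  have h2 : ∀ᶠ r in nhdsWithin (0:ℝ≥0∞) (Ioi 0), r ∈ Ioi (0:ℝ≥0∞) :=
    eventually_mem_nhdsWithin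
  rcases (h1.and h2).exists with ⟨r, hr1, hr2⟩
  exact ⟨r, hr2, hr1⟩

/-- (1) → (4). -/
lemma exists_op_right_le_one (hP : P.Nondegenerate) {t : ℝ≥0∞} (h : P.OFinite t) :
    ∃ s' : ℝ≥0∞, 0 < s' ∧ P.op t s' ≤ P.one := by
  rcases eq_or_ne t 0 with rfl | ht0
  · exact ⟨1, zero_lt_one, by rw [P.zero_op]; exact zero_le⟩
  rcases eq_or_ne t ⊤ with rfl | httop
  · by_contra hc
    push_neg at hc
    obtain ⟨s, hs, hsa⟩ := P.exists_op_lt h (by simp : (0:ℝ≥0∞) < ⊤)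
    have ha0 : 0 < P.op s ⊤ := P.op_pos hs (by simp)
    have key : ∀ r ∈ Ioi (0:ℝ≥0∞), P.op s P.one ≤ P.op (P.op s ⊤) r := fun r hr => by
      calc P.op s P.one ≤ P.op s (P.op ⊤ r) := P.mono_right s (hc r hr).le
        _ = P.op (P.op s ⊤) r := (P.assoc s ⊤ r).symm
    have hs1 : 0 < P.op s P.one := P.op_pos hs P.one_pos
    obtain ⟨r, hr, hrlt⟩ := P.exists_op_right_lt ha0 hsa hs1
    exact absurd (key r hr) (not_le_of_gt hrlt)
  · have ht0' : 0 < t := pos_iff_ne_zero.mpr ht0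
    obtain ⟨r, hr, hrlt⟩ := P.exists_op_right_lt ht0' (lt_top_iff_ne_top.mpr httop) P.one_pos
    exact ⟨r, hr, hrlt.le⟩

end PseudoMul


/-- Characterizations of `⊙`-finiteness for a non-degenerate
pseudo-multiplication. -/
theorem ofinite_tfae (P : PseudoMul) (hP : P.Nondegenerate) (t : ℝ≥0∞) :
    [P.OFinite t,
      ∃ s : ℝ≥0∞, 0 < s ∧ P.OFinite (P.op s t),
      ∃ s : ℝ≥0∞, 0 < s ∧ P.op s t ≤ P.one,
      ∃ s' : ℝ≥0∞, 0 < s' ∧ P.op t s' ≤ P.one,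
      ∃ s' : ℝ≥0∞, 0 < s' ∧ P.OFinite (P.op t s')].TFAE := by
  tfae_have 1 → 2 := fun h => ⟨P.one, P.one_pos, by rwa [P.one_op]⟩
  tfae_have 2 → 1 := fun ⟨s, hs, h⟩ => P.ofinite_of_op_left hs h
  tfae_have 1 → 3 := fun h => by
    obtain ⟨s, hs, hlt⟩ := P.exists_op_lt h P.one_pos
    exact ⟨s, hs, hlt.le⟩
  tfae_have 3 → 1 := fun ⟨s, hs, hle⟩ =>
    P.ofinite_of_op_left hs (P.ofinite_of_le_one hP hle)
  tfae_have 1 → 4 := fun h => P.exists_op_right_le_one hP h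
  tfae_have 4 → 1 := fun ⟨s', hs', h⟩ => P.ofinite_of_op_right hP hs' h
  tfae_have 4 → 5 := fun ⟨s', hs', h⟩ => ⟨s', hs', P.ofinite_of_le_one hP h⟩
  tfae_have 5 → 1 := fun ⟨s', hs', h⟩ => by
    obtain ⟨r, hr, hle⟩ := P.exists_op_lt h P.one_pos
    have hle' : P.op (P.op r t) s' ≤ P.one := by rw [P.assoc]; exact hle.le
    exact P.ofinite_of_op_left hr (P.ofinite_of_op_right hP hs' hle')
  tfae_finish
end

section
/- Let ⊙ be a pseudo-multiplication on [0,∞] and suppose that the set F⊙ of ⊙-finite elements equals [0, φ) for some φ ∈ (1⊙, ∞]. Then ⨅_{s>0} s ⊙ φ = φ, and t ⊙ φ = φ ⊙ t = φ for all t with 0 < t ≤ φ; in particular φ ⊙ φ = φ. -/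
open scoped ENNReal
open Set

lemma PseudoMul.one_pos_s6 (P : PseudoMul) : 0 < P.one := by
  rcases eq_or_ne P.one 0 with h | h
  · exfalso
    have h1 := P.one_op 1
    rw [h, P.zero_op] at h1
    exact one_ne_zero h1.symm
  · exact pos_iff_ne_zero.mpr h

lemma PseudoMul.continuousAt_right (P : PseudoMul) {s : ℝ≥0∞} (h0 : s ≠ 0) (ht : s ≠ ⊤)
    (c : ℝ≥0∞) : ContinuousAt (fun x => P.op s x) c := by
  have hopen : IsOpen (Ioo (0:ℝ≥0∞) ⊤ ×ˢ (univ : Set ℝ≥0∞)) := isOpen_Ioo.prod isOpen_univ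
  have hmem : (s, c) ∈ Ioo (0:ℝ≥0∞) ⊤ ×ˢ (univ : Set ℝ≥0∞) :=
    ⟨⟨pos_iff_ne_zero.mpr h0, lt_top_iff_ne_top.mpr ht⟩, mem_univ _⟩
  have h1 := P.continuousOn.continuousAt (hopen.mem_nhds hmem)
  exact h1.comp (Continuous.continuousAt (continuous_const.prodMk continuous_id))

/-- If the set of `⊙`-finite elements equals `[0, φ)` with `φ > 1⊙`, then
`⨅_{s>0} s ⊙ φ = φ` and `t ⊙ φ = φ ⊙ t = φ` for all `0 < t ≤ φ`; in
particular `φ` is idempotent. -/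
theorem phi_absorbing (P : PseudoMul) (φ : ℝ≥0∞) (hφ : P.one < φ)
    (hF : {t : ℝ≥0∞ | P.OFinite t} = Iio φ) :
    (⨅ s ∈ Ioi (0 : ℝ≥0∞), P.op s φ) = φ ∧
      (∀ t : ℝ≥0∞, 0 < t → t ≤ φ → P.op t φ = φ ∧ P.op φ t = φ) ∧
      P.op φ φ = φ := by
  have hone : (0:ℝ≥0∞) < P.one := P.one_pos_s6
  have hφ0 : (0:ℝ≥0∞) < φ := lt_trans hone hφ
  have hfin : ∀ x : ℝ≥0∞, x < φ → (⨅ s ∈ Ioi (0:ℝ≥0∞), P.op s x) = 0 := by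
    intro x hx
    exact (Set.ext_iff.mp hF x).mpr hx
  have hnfin : ∀ x : ℝ≥0∞, (⨅ s ∈ Ioi (0:ℝ≥0∞), P.op s x) ≠ 0 → φ ≤ x := by
    intro x hx
    by_contra h
    exact hx (hfin x (not_le.mp h))
  -- the infimum is at most the value at `one`
  have hIle : ∀ v : ℝ≥0∞, (⨅ s ∈ Ioi (0:ℝ≥0∞), P.op s v) ≤ v := by
    intro v
    calc (⨅ s ∈ Ioi (0:ℝ≥0∞), P.op s v) ≤ P.op P.one v := iInf₂_le P.one hone
      _ = v := P.one_op v
  -- key lemma: a nonzero infimum is at least φ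
  have key : ∀ v : ℝ≥0∞, (⨅ s ∈ Ioi (0:ℝ≥0∞), P.op s v) ≠ 0 →
      φ ≤ ⨅ s ∈ Ioi (0:ℝ≥0∞), P.op s v := by
    intro v hv
    by_contra hlt
    push_neg at hlt
    set c := ⨅ s ∈ Ioi (0:ℝ≥0∞), P.op s v with hc
    have hc0 : 0 < c := pos_iff_ne_zero.mpr hv
    have hcfin : (⨅ s ∈ Ioi (0:ℝ≥0∞), P.op s c) = 0 := hfin c hlt
    have hcge : c ≤ ⨅ s ∈ Ioi (0:ℝ≥0∞), P.op s c := by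
      refine le_iInf₂ fun s hs => ?_
      rcases eq_or_ne s ⊤ with rfl | hstop
      · calc c = P.op P.one c := (P.one_op c).symm
          _ ≤ P.op ⊤ c := P.mono_left c le_top
      · by_contra hsc
        push_neg at hsc
        have hca : ContinuousAt (fun x => P.op s x) c :=
          P.continuousAt_right (ne_of_gt (mem_Ioi.mp hs)) hstop c
        have hV : (fun x => P.op s x) ⁻¹' Iio c ∈ nhds c := hca (isOpen_Iio.mem_nhds hsc)
        obtain ⟨u, hcu, hsub⟩ := exists_Ico_subset_of_mem_nhds hV ⟨⊤, lt_of_lt_of_le hlt le_top⟩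
        obtain ⟨s', hs', hlt'⟩ : ∃ s' ∈ Ioi (0:ℝ≥0∞), P.op s' v < u := by
          by_contra h
          push_neg at h
          have : u ≤ c := le_iInf₂ h
          exact absurd hcu (not_lt.mpr this)
        have hmem : P.op s' v ∈ Ico c u := ⟨iInf₂_le s' hs', hlt'⟩
        have h1 : P.op s (P.op s' v) < c := hsub hmem
        have h2 : c ≤ P.op s (P.op s' v) := by
          rw [← P.assoc]
          refine iInf₂_le _ (mem_Ioi.mpr ?_)
          refine pos_iff_ne_zero.mpr fun h0 => ?_
          rcases P.no_zero_divisors _ _ h0 with h | h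
          · exact (ne_of_gt (mem_Ioi.mp hs)) h
          · exact (ne_of_gt (mem_Ioi.mp hs')) h
        exact absurd h1 (not_lt.mpr h2)
    rw [hcfin] at hcge
    exact hv (le_antisymm hcge (zero_le))
  -- ⨅ s>0, s⊙φ = φ
  have hIφ : (⨅ s ∈ Ioi (0:ℝ≥0∞), P.op s φ) = φ := by
    have hne : (⨅ s ∈ Ioi (0:ℝ≥0∞), P.op s φ) ≠ 0 := by
      intro h
      have : φ < φ := (Set.ext_iff.mp hF φ).mp h
      exact lt_irrefl _ this
    exact le_antisymm (hIle φ) (key φ hne)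
  -- s ⊙ φ ≥ φ for s > 0
  have hsφ : ∀ s : ℝ≥0∞, 0 < s → φ ≤ P.op s φ := by
    intro s hs
    calc φ = ⨅ s ∈ Ioi (0:ℝ≥0∞), P.op s φ := hIφ.symm
      _ ≤ P.op s φ := iInf₂_le s hs
  -- t ⊙ φ ≤ φ for finite t > 0
  have hle : ∀ t : ℝ≥0∞, 0 < t → t ≠ ⊤ → P.op t φ ≤ φ := by
    intro t ht htop
    by_contra hb
    push_neg at hb
    obtain ⟨u, hu, hlt'⟩ : ∃ u ∈ Ioi (0:ℝ≥0∞), P.op u φ < P.op t φ := by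
      by_contra h
      push_neg at h
      have : P.op t φ ≤ φ := le_trans (le_iInf₂ h) (hIφ.le)
      exact absurd hb (not_lt.mpr this)
    -- find s > 0 with t ⊙ s < u
    have hca : ContinuousAt (fun x => P.op t x) 0 := P.continuousAt_right (ne_of_gt ht) htop 0
    have hca' : Filter.Tendsto (fun x => P.op t x) (nhds 0) (nhds 0) := by
      have := hca
      rwa [ContinuousAt, P.op_zero] at this
    have hmem : (fun x => P.op t x) ⁻¹' Iio u ∈ nhds (0:ℝ≥0∞) :=
      hca' (isOpen_Iio.mem_nhds (mem_Ioi.mp hu))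
    haveI : (nhdsWithin (0:ℝ≥0∞) (Ioi 0)).NeBot :=
      nhdsGT_neBot_of_exists_gt ⟨1, zero_lt_one⟩
    obtain ⟨s, hs1, hs2⟩ := Filter.nonempty_of_mem (Filter.inter_mem (nhdsWithin_le_nhds hmem)
      (self_mem_nhdsWithin : Ioi (0:ℝ≥0∞) ∈ nhdsWithin 0 (Ioi 0)))
    -- hs1 : op t s < u, hs2 : s > 0
    have chain : P.op t φ ≤ P.op u φ := by
      calc P.op t φ ≤ P.op t (P.op s φ) := P.mono_right t (hsφ s hs2)
        _ = P.op (P.op t s) φ := (P.assoc t s φ).symm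
        _ ≤ P.op u φ := P.mono_left φ (le_of_lt hs1)
    exact absurd (lt_of_le_of_lt chain hlt') (lt_irrefl _)
  -- t ⊙ φ = φ for 0 < t ≤ φ
  have htφ : ∀ t : ℝ≥0∞, 0 < t → t ≤ φ → P.op t φ = φ := by
    intro t ht htle
    rcases eq_or_ne φ ⊤ with rfl | hφtop
    · exact top_le_iff.mp (hsφ t ht)
    · have htop : t ≠ ⊤ := fun h => hφtop (top_le_iff.mp (h ▸ htle))
      exact le_antisymm (hle t ht htop) (hsφ t ht)
  -- φ ⊙ t = φ for 0 < t ≤ φ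
  have hφt : ∀ t : ℝ≥0∞, 0 < t → t ≤ φ → P.op φ t = φ := by
    intro t ht htle
    have hpos : 0 < P.op φ t := by
      refine pos_iff_ne_zero.mpr fun h0 => ?_
      rcases P.no_zero_divisors _ _ h0 with h | h
      · exact (ne_of_gt hφ0) h
      · exact (ne_of_gt ht) h
    have hge : φ ≤ P.op φ t := by
      have hne : (⨅ s ∈ Ioi (0:ℝ≥0∞), P.op s (P.op φ t)) ≠ 0 := by
        have hlow : P.op φ t ≤ ⨅ s ∈ Ioi (0:ℝ≥0∞), P.op s (P.op φ t) := by
          refine le_iInf₂ fun s hs => ?_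
          rw [← P.assoc]
          exact P.mono_left t (hsφ s (mem_Ioi.mp hs))
        intro h
        rw [h] at hlow
        exact (ne_of_gt hpos) (le_antisymm hlow (zero_le))
      exact le_trans (hnfin _ hne) le_rfl
    rcases eq_or_ne φ ⊤ with rfl | hφtop
    · exact top_le_iff.mp hge
    · have : P.op φ t ≤ P.op φ φ := P.mono_right φ htle
      rw [htφ φ hφ0 le_rfl] at this
      exact le_antisymm this hge
  exact ⟨hIφ, fun t ht htle => ⟨htφ t ht htle, hφt t ht htle⟩, htφ φ hφ0 le_rfl⟩
end

section
/- Let ⊙ be a pseudo-multiplication on [0,∞] and let φ denote the supremum of the set of ⊙-finite elements. Then there do not exist t < φ and t' > φ such that t ⊙ t' = φ. -/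
open scoped ENNReal
open Set

/-- If `φ` is the supremum of the set of `⊙`-finite elements, there are no
`t < φ` and `t' > φ` with `t ⊙ t' = φ`. -/
theorem no_decomposition_of_phi (P : PseudoMul) (φ : ℝ≥0∞)
    (hφ : φ = sSup {t : ℝ≥0∞ | P.OFinite t}) :
    ¬ ∃ t t' : ℝ≥0∞, t < φ ∧ φ < t' ∧ P.op t t' = φ := by
  rintro ⟨t, t', ht, ht', heq⟩
  have hφ0 : 0 < φ := lt_of_le_of_lt (zero_le : (0:ℝ≥0∞) ≤ t) ht
  have ht0 : 0 < t := by
    rcases (zero_le : (0:ℝ≥0∞) ≤ t).eq_or_lt with h | h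
    · exfalso
      rw [← h, P.zero_op t'] at heq
      exact hφ0.ne' heq.symm
    · exact h
  -- L2 : everything below φ is finite
  have L2 : ∀ y, y < φ → P.OFinite y := by
    intro y hy
    rw [hφ] at hy
    obtain ⟨a, ha, hya⟩ := lt_sSup_iff.mp hy
    have hmono : (⨅ s ∈ Ioi (0:ℝ≥0∞), P.op s y) ≤ ⨅ s ∈ Ioi (0:ℝ≥0∞), P.op s a :=
      iInf_mono fun s => iInf_mono fun _ => P.mono_right s hya.le
    exact le_antisymm (hmono.trans (le_of_eq ha)) zero_le
  -- L3 : finite elements are ≤ φ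
  have L3 : ∀ y, P.OFinite y → y ≤ φ := fun y hy => hφ ▸ le_sSup hy
  -- L4 : r > 0 and w not finite imply φ ≤ r ⊙ w
  have L4 : ∀ r w, 0 < r → ¬ P.OFinite w → φ ≤ P.op r w := by
    intro r w hr hw
    by_contra h
    push_neg at h
    have hfin := L2 _ h
    have hc : (⨅ x ∈ Ioi (0:ℝ≥0∞), P.op x w) ≠ 0 := hw
    have hle : (⨅ x ∈ Ioi (0:ℝ≥0∞), P.op x w) ≤ ⨅ s ∈ Ioi (0:ℝ≥0∞), P.op s (P.op r w) := by
      refine le_iInf₂ fun s hs => ?_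
      rw [← P.assoc]
      refine iInf₂_le (P.op s r) ?_
      refine mem_Ioi.mpr (pos_iff_ne_zero.mpr fun h0 => ?_)
      rcases P.no_zero_divisors s r h0 with h1 | h1
      · exact (mem_Ioi.mp hs).ne' h1
      · exact hr.ne' h1
    rw [hfin] at hle
    exact hc (le_antisymm hle zero_le)
  -- the finite replacement for t'
  have hφtop : φ < ⊤ := lt_of_lt_of_le ht' le_top
  set v : ℝ≥0∞ := min (φ + 1) t' with hv
  have hv1 : φ < v := lt_min (ENNReal.lt_add_right hφtop.ne one_ne_zero) ht'
  have hv2 : v ≤ t' := min_le_right _ _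
  have hvtop : v < ⊤ :=
    lt_of_le_of_lt (min_le_left _ _) (ENNReal.add_lt_top.mpr ⟨hφtop, ENNReal.one_lt_top⟩)
  have hvfin : ¬ P.OFinite v := fun h => absurd (L3 v h) (not_le.mpr hv1)
  -- L5 : s ⊙ v = φ for 0 < s ≤ t
  have L5 : ∀ s, 0 < s → s ≤ t → P.op s v = φ := by
    intro s hs hst
    refine le_antisymm ?_ (L4 s v hs hvfin)
    calc P.op s v ≤ P.op t v := P.mono_left v hst
    _ ≤ P.op t t' := P.mono_right t hv2
    _ = φ := heq
  -- C1 : for all z > 0, φ ≤ v ⊙ z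
  have C1 : ∀ z, 0 < z → φ ≤ P.op v z := by
    intro z hz
    by_contra h
    push_neg at h
    have hfin := L2 _ h
    have hle : P.op φ z ≤ ⨅ s ∈ Ioi (0:ℝ≥0∞), P.op s (P.op v z) := by
      refine le_iInf₂ fun s hs => ?_
      rw [← P.assoc]
      rcases le_total s t with hst | hts
      · rw [L5 s hs hst]
      · calc P.op φ z = P.op (P.op t v) z := by rw [L5 t ht0 le_rfl]
        _ ≤ P.op (P.op s v) z := P.mono_left z (P.mono_left v hts)
    rw [hfin] at hle
    have h0 : P.op φ z = 0 := le_antisymm hle zero_le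
    rcases P.no_zero_divisors φ z h0 with h1 | h1
    · exact hφ0.ne' h1
    · exact hz.ne' h1
  -- C2 : continuity of z ↦ v ⊙ z at 0 produces z > 0 with v ⊙ z < φ
  have hvIoo : (v, (0:ℝ≥0∞)) ∈ Ioo (0:ℝ≥0∞) ⊤ ×ˢ (univ : Set ℝ≥0∞) :=
    ⟨⟨lt_of_le_of_lt (zero_le : (0:ℝ≥0∞) ≤ φ) hv1, hvtop⟩, mem_univ _⟩
  have hopen : IsOpen (Ioo (0:ℝ≥0∞) ⊤ ×ˢ (univ : Set ℝ≥0∞)) := isOpen_Ioo.prod isOpen_univ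
  have hca : ContinuousAt (fun p : ℝ≥0∞ × ℝ≥0∞ => P.op p.1 p.2) (v, 0) :=
    P.continuousOn.continuousAt (hopen.mem_nhds hvIoo)
  have hg : ContinuousAt (fun z => P.op v z) 0 :=
    hca.comp (Continuous.continuousAt (by continuity))
  have hg0 : P.op v 0 = 0 := P.op_zero v
  have h_ev : ∀ᶠ z in nhds (0:ℝ≥0∞), P.op v z < φ := by
    have ht : Filter.Tendsto (fun z => P.op v z) (nhds 0) (nhds 0) := by
      have := hg.tendsto
      rwa [hg0] at this
    exact ht.eventually (gt_mem_nhds hφ0)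
  have h_ev' : ∀ᶠ z in nhdsWithin (0:ℝ≥0∞) (Ioi 0), P.op v z < φ :=
    h_ev.filter_mono nhdsWithin_le_nhds
  obtain ⟨z, hzlt, hz0⟩ := (h_ev'.and (eventually_mem_nhdsWithin)).exists
  exact absurd hzlt (not_lt.mpr (C1 z hz0))
end
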